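/- arXiv:1811.01094 — 2 statements merged into one kernel-verified Lean document; each statement's English description precedes it below -/
import Mathlib

section
/- Let α = (I^g, α^g)_{g∈mor(𝒢)} be an associative partial action of a groupoid 𝒢 on an R-semicategory C. Suppose 𝒢₀ is finite and that for every x ∈ C₀ and every e ∈ 𝒢₀ ∩ 𝒢^x the ideal _xI^e_x has a local identity 1^e_x. Then the skew groupoid semicategory C∗_α𝒢 is an R-category: for each object x, the morphism u = Σ_{e∈𝒢₀∩𝒢^x} 1^e_x ∈ _x(C∗_α𝒢)_x satisfies fu = f and ug = g for all f ∈ _z(C∗_α𝒢)_x and g ∈ _x(C∗_α𝒢)_z. -/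
open scoped Classical

noncomputable section

universe u u₂ v v' w w'

/-- A one-sorted (algebraic) groupoid: a set `G` of morphisms with a
partially defined multiplication (`comp g h` meaning `d g = r h`), a total
extension `mul` of it, and inversion. -/
structure AlgGroupoid (G : Type u₂) where
  mul : G → G → G
  inv : G → G
  comp : G → G → Prop
  comp_iff : ∀ g h, comp g h ↔ mul (inv g) g = mul h (inv h)
  mul_assoc' : ∀ g h k, comp g h → comp h k → mul (mul g h) k = mul g (mul h k)
  comp_mul_left : ∀ g h k, comp g h → comp h k → comp (mul g h) k
  comp_mul_right : ∀ g h k, comp g h → comp h k → comp g (mul h k)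
  inv_inv' : ∀ g, inv (inv g) = g
  comp_inv_left : ∀ g, comp (inv g) g
  comp_inv_right : ∀ g, comp g (inv g)
  inv_mul_cancel' : ∀ g h, comp g h → mul (inv g) (mul g h) = h
  mul_inv_cancel' : ∀ g h, comp g h → mul (mul g h) (inv h) = g
  inv_mul' : ∀ g h, comp g h → inv (mul g h) = mul (inv h) (inv g)

namespace AlgGroupoid

variable {G : Type u₂}

/-- The domain identity `d g = g⁻¹ g`. -/
def d (𝒢 : AlgGroupoid G) (g : G) : G := 𝒢.mul (𝒢.inv g) g

/-- The range identity `r g = g g⁻¹`. -/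
def r (𝒢 : AlgGroupoid G) (g : G) : G := 𝒢.mul g (𝒢.inv g)

/-- The set of identities `𝒢₀` of the groupoid. -/
def units (𝒢 : AlgGroupoid G) : Set G := {e | ∃ g, e = 𝒢.d g}

/-- A partial action of a groupoid `𝒢` on the subset `X` of the type `Y`:
the data is a family of domains `D g ⊆ X` and a (total extension of a)
family of maps `act g : D g⁻¹ → D g`. -/
def IsPartialActionOn {Y : Type v} (𝒢 : AlgGroupoid G)
    (X : Set Y) (D : G → Set Y) (act : G → Y → Y) : Prop :=
  (∀ g, D g ⊆ X) ∧
  (∀ g, D g ⊆ D (𝒢.r g)) ∧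
  (∀ x ∈ X, ∃ e ∈ 𝒢.units, x ∈ D e) ∧
  (∀ e ∈ 𝒢.units, ∀ x ∈ D e, act e x = x) ∧
  (∀ g, ∀ x ∈ D (𝒢.inv g), act g x ∈ D g) ∧
  (∀ g, ∀ x ∈ D (𝒢.inv g), act (𝒢.inv g) (act g x) = x) ∧
  (∀ g h, 𝒢.comp g h → act g '' (D (𝒢.inv g) ∩ D h) = D g ∩ D (𝒢.mul g h)) ∧
  (∀ g h, 𝒢.comp g h → ∀ x ∈ D (𝒢.inv h),
      act h x ∈ D (𝒢.inv g) ∩ D h → act g (act h x) = act (𝒢.mul g h) x)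

/-- A partial action of a groupoid on (all of) a set `Y`. -/
def IsSetPartialAction {Y : Type v} (𝒢 : AlgGroupoid G)
    (D : G → Set Y) (act : G → Y → Y) : Prop :=
  𝒢.IsPartialActionOn Set.univ D act

/-- A partial set action is global when `α_g ∘ α_h = α_{gh}` (as partially
defined maps) for every composable pair `(g, h)`. -/
def SetActionIsGlobal {Y : Type v} (𝒢 : AlgGroupoid G)
    (D : G → Set Y) (act : G → Y → Y) : Prop :=
  ∀ g h, 𝒢.comp g h →
    D (𝒢.inv (𝒢.mul g h)) = {x ∈ D (𝒢.inv h) | act h x ∈ D (𝒢.inv g)} ∧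
    ∀ x ∈ D (𝒢.inv (𝒢.mul g h)), act g (act h x) = act (𝒢.mul g h) x

end AlgGroupoid
/-- An `R`-semicategory with object type `Ob`: morphism `R`-modules
`Hom y x` (the morphisms *from `x` to `y`*, i.e. `_yC_x`) and an
associative `R`-bilinear composition (no identities required). -/
structure RSemicat (R : Type u) [CommRing R] (Ob : Type v) : Type (max u v (w + 1)) where
  Hom : Ob → Ob → Type w
  [homAdd : ∀ y x, AddCommGroup (Hom y x)]
  [homMod : ∀ y x, Module R (Hom y x)]
  comp : ∀ {z y x : Ob}, Hom z y → Hom y x → Hom z x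
  comp_assoc : ∀ {v z y x : Ob} (f : Hom v z) (g : Hom z y) (h : Hom y x),
      comp (comp f g) h = comp f (comp g h)
  comp_add_left : ∀ {z y x : Ob} (f f' : Hom z y) (g : Hom y x),
      comp (f + f') g = comp f g + comp f' g
  comp_add_right : ∀ {z y x : Ob} (f : Hom z y) (g g' : Hom y x),
      comp f (g + g') = comp f g + comp f g'
  comp_smul_left : ∀ {z y x : Ob} (c : R) (f : Hom z y) (g : Hom y x),
      comp (c • f) g = c • comp f g
  comp_smul_right : ∀ {z y x : Ob} (c : R) (f : Hom z y) (g : Hom y x),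
      comp f (c • g) = c • comp f g

attribute [instance] RSemicat.homAdd RSemicat.homMod

namespace RSemicat

variable {R : Type u} [CommRing R] {Ob : Type v}

theorem comp_zero_left (C : RSemicat.{u, v, w} R Ob) {z y x : Ob} (g : C.Hom y x) :
    C.comp (0 : C.Hom z y) g = 0 := by
  have h := C.comp_add_left (0 : C.Hom z y) 0 g
  rw [add_zero] at h
  exact left_eq_add.mp h

theorem comp_zero_right (C : RSemicat.{u, v, w} R Ob) {z y x : Ob} (f : C.Hom z y) :
    C.comp f (0 : C.Hom y x) = 0 := by
  have h := C.comp_add_right f (0 : C.Hom y x) 0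
  rw [add_zero] at h
  exact left_eq_add.mp h

/-- An ideal of an `R`-semicategory: a family of submodules closed under
composition with arbitrary morphisms on either side. -/
def IsIdeal (C : RSemicat R Ob) (I : ∀ y x : Ob, Submodule R (C.Hom y x)) : Prop :=
  (∀ (z y x : Ob) (u : C.Hom z y) (f : C.Hom y x), f ∈ I y x → C.comp u f ∈ I z x) ∧
  (∀ (z y x : Ob) (f : C.Hom z y) (u : C.Hom y x), f ∈ I z y → C.comp f u ∈ I z x)

/-- `J` is an ideal of the ideal `I`: `J ⊆ I` and `J` is closed under
composition with morphisms of `I` on either side. -/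
def IsIdealIn (C : RSemicat R Ob) (J I : ∀ y x : Ob, Submodule R (C.Hom y x)) : Prop :=
  (∀ y x, J y x ≤ I y x) ∧
  (∀ (z y x : Ob) (u : C.Hom z y) (f : C.Hom y x), u ∈ I z y → f ∈ J y x → C.comp u f ∈ J z x) ∧
  (∀ (z y x : Ob) (f : C.Hom z y) (u : C.Hom y x), f ∈ J z y → u ∈ I y x → C.comp f u ∈ J z x)

/-- `u ∈ _xI_x` is a local identity of the ideal `I` at the object `x`. -/
def IsLocalIdentity (C : RSemicat R Ob) (I : ∀ y x : Ob, Submodule R (C.Hom y x))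
    (x : Ob) (u : C.Hom x x) : Prop :=
  (∀ (y : Ob) (f : C.Hom x y), f ∈ I x y → C.comp u f = f) ∧
  (∀ (y : Ob) (f : C.Hom y x), f ∈ I y x → C.comp f u = f)

/-- `u ∈ _xI_x` is a left local identity of the ideal `I` at the object `x`. -/
def IsLeftLocalIdentity (C : RSemicat R Ob) (I : ∀ y x : Ob, Submodule R (C.Hom y x))
    (x : Ob) (u : C.Hom x x) : Prop :=
  ∀ (y : Ob) (f : C.Hom x y), f ∈ I x y → C.comp u f = f

/-- An `R`-semicategory is an `R`-category when every object has an
identity morphism. -/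
def HasIdentities (C : RSemicat R Ob) : Prop :=
  ∀ x : Ob, ∃ u : C.Hom x x,
    (∀ (y : Ob) (f : C.Hom x y), C.comp u f = f) ∧
    (∀ (y : Ob) (f : C.Hom y x), C.comp f u = f)

end RSemicat

/-- The raw data of a partial action of a groupoid (with morphism type `G`)
on an `R`-semicategory `C`: domains `D₀ g` and (total extensions of) maps
`act₀ g` on objects, a family of submodules `I g` (the ideals `I^g`) and
(total extensions of) maps `act g : I^{g⁻¹} → I^g` on morphisms. -/
structure SemicatActionData (R : Type u) [CommRing R] (G : Type u₂) {Ob : Type v}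
    (C : RSemicat.{u, v, w} R Ob) where
  D₀ : G → Set Ob
  act₀ : G → Ob → Ob
  I : G → ∀ y x : Ob, Submodule R (C.Hom y x)
  act : ∀ (g : G) {y x : Ob}, C.Hom y x → C.Hom (act₀ g y) (act₀ g x)

variable {R : Type u} [CommRing R] {G : Type u₂} {Ob : Type v}

/-- Definition of a partial action of a groupoid `𝒢` on an `R`-semicategory `C`. -/
def IsSemicatPartialAction (𝒢 : AlgGroupoid G) (C : RSemicat.{u, v, w} R Ob)
    (a : SemicatActionData R G C) : Prop :=
  -- (i) a partial action on the set of objects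
  𝒢.IsSetPartialAction a.D₀ a.act₀ ∧
  -- (ii) `_yI^g_x = 0` unless `{y, x} ⊆ C₀^g`
  (∀ (g : G) (y x : Ob), ¬(y ∈ a.D₀ g ∧ x ∈ a.D₀ g) → a.I g y x = ⊥) ∧
  -- `I^g ⊴ I^{r g} ⊴ C`
  (∀ g : G, C.IsIdealIn (a.I g) (a.I (𝒢.r g))) ∧
  (∀ g : G, C.IsIdeal (a.I (𝒢.r g))) ∧
  -- (iii) `α^g : I^{g⁻¹} → I^g` is an isomorphism of `R`-semicategories
  (∀ (g : G) (y x : Ob) (f : C.Hom y x), f ∈ a.I (𝒢.inv g) y x →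
      a.act g f ∈ a.I g (a.act₀ g y) (a.act₀ g x)) ∧
  (∀ (g : G) (y x : Ob) (f f' : C.Hom y x), f ∈ a.I (𝒢.inv g) y x →
      f' ∈ a.I (𝒢.inv g) y x → a.act g (f + f') = a.act g f + a.act g f') ∧
  (∀ (g : G) (y x : Ob) (c : R) (f : C.Hom y x), f ∈ a.I (𝒢.inv g) y x →
      a.act g (c • f) = c • a.act g f) ∧
  (∀ (g : G) (y x : Ob) (f f' : C.Hom y x), f ∈ a.I (𝒢.inv g) y x →
      f' ∈ a.I (𝒢.inv g) y x → a.act g f = a.act g f' → f = f') ∧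
  (∀ g : G, ∀ y ∈ a.D₀ (𝒢.inv g), ∀ x ∈ a.D₀ (𝒢.inv g),
      ∀ k ∈ a.I g (a.act₀ g y) (a.act₀ g x), ∃ f ∈ a.I (𝒢.inv g) y x, a.act g f = k) ∧
  (∀ (g : G) (z y x : Ob) (f : C.Hom z y) (f' : C.Hom y x), f ∈ a.I (𝒢.inv g) z y →
      f' ∈ a.I (𝒢.inv g) y x → a.act g (C.comp f f') = C.comp (a.act g f) (a.act g f')) ∧
  -- (iv) `α^e = id` on `I^e` for identities `e`
  (∀ e ∈ 𝒢.units, ∀ (y x : Ob) (f : C.Hom y x), f ∈ a.I e y x → HEq (a.act e f) f) ∧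
  -- (v)
  (∀ g h : G, 𝒢.comp g h → ∀ (y x : Ob) (f : C.Hom y x),
      f ∈ a.I h y x → f ∈ a.I (𝒢.inv g) y x →
      a.act (𝒢.inv h) f ∈
        a.I (𝒢.inv (𝒢.mul g h)) (a.act₀ (𝒢.inv h) y) (a.act₀ (𝒢.inv h) x)) ∧
  -- (vi) `α^g ∘ α^h = α^{gh}` on `α^{h⁻¹}(I^h ∩ I^{g⁻¹})`
  (∀ g h : G, 𝒢.comp g h → ∀ (y x : Ob) (f : C.Hom y x), f ∈ a.I (𝒢.inv h) y x →
      a.act h f ∈ a.I (𝒢.inv g) (a.act₀ h y) (a.act₀ h x) →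
      HEq (a.act g (a.act h f)) (a.act (𝒢.mul g h) f))

/-- A partial action of a groupoid on an `R`-semicategory is global when
`α^g ∘ α^h = α^{gh}` and `α₀^g ∘ α₀^h = α₀^{gh}` for every composable pair. -/
def SemicatActionIsGlobal (𝒢 : AlgGroupoid G) (C : RSemicat.{u, v, w} R Ob)
    (a : SemicatActionData R G C) : Prop :=
  𝒢.SetActionIsGlobal a.D₀ a.act₀ ∧
  ∀ g h : G, 𝒢.comp g h → ∀ (y x : Ob) (f : C.Hom y x),
    (f ∈ a.I (𝒢.inv (𝒢.mul g h)) y x ↔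
      f ∈ a.I (𝒢.inv h) y x ∧ a.act h f ∈ a.I (𝒢.inv g) (a.act₀ h y) (a.act₀ h x)) ∧
    (f ∈ a.I (𝒢.inv (𝒢.mul g h)) y x → HEq (a.act g (a.act h f)) (a.act (𝒢.mul g h) f))
section Skew

variable (𝒢 : AlgGroupoid G)

/-- The product of homogeneous components in the (possibly non-associative)
partial skew groupoid semicategory `C ∗_α 𝒢`:
for `f ∈ _zI^t_{ty}` and `l ∈ _yI^g_{gx}` the product is
`α^t(α^{t⁻¹}(f) ∘ l) ∈ _zI^{tg}_{(tg)x}` when `(t, g)` is composable and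
`x ∈ C₀^{(tg)⁻¹}`, and `0` otherwise. -/
def skewMul (C : RSemicat.{u, v, w} R Ob) (a : SemicatActionData R G C) (t g : G)
    {z y x : Ob} (f : C.Hom z (a.act₀ t y)) (l : C.Hom y (a.act₀ g x)) :
    C.Hom z (a.act₀ (𝒢.mul t g) x) :=
  if h : 𝒢.comp t g ∧ x ∈ a.D₀ (𝒢.inv (𝒢.mul t g)) ∧
      a.act₀ (𝒢.inv t) (a.act₀ t y) = y ∧ a.act₀ t (a.act₀ (𝒢.inv t) z) = z ∧
      a.act₀ t (a.act₀ g x) = a.act₀ (𝒢.mul t g) x then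
    cast (by rw [h.2.2.2.1, h.2.2.2.2])
      (a.act t (C.comp (cast (by rw [h.2.2.1]) (a.act (𝒢.inv t) f)) l))
  else 0

/-- Associativity of the partial skew groupoid semicategory `C ∗_α 𝒢`:
`(f l) k = f (l k)` on homogeneous components. -/
def SkewAssoc (C : RSemicat.{u, v, w} R Ob) (a : SemicatActionData R G C) : Prop :=
  ∀ (t g h : G) (z y x u : Ob),
    y ∈ a.D₀ (𝒢.inv t) → x ∈ a.D₀ (𝒢.inv g) → u ∈ a.D₀ (𝒢.inv h) →
    ∀ (f : C.Hom z (a.act₀ t y)) (l : C.Hom y (a.act₀ g x)) (k : C.Hom x (a.act₀ h u)),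
      f ∈ a.I t z (a.act₀ t y) → l ∈ a.I g y (a.act₀ g x) → k ∈ a.I h x (a.act₀ h u) →
      HEq (skewMul 𝒢 C a (𝒢.mul t g) h (skewMul 𝒢 C a t g f l) k)
          (skewMul 𝒢 C a t (𝒢.mul g h) f (skewMul 𝒢 C a g h l k))

end Skew

section Algebra

/-- The underlying module of the `R`-algebra `a(C) = ⊕_{x,y ∈ C₀} _yC_x`. -/
abbrev aHom (C : RSemicat.{u, v, w} R Ob) : Type (max v w) :=
  Π₀ p : Ob × Ob, C.Hom p.1 p.2

/-- The multiplication of the `R`-algebra `a(C)`: the matrix product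
induced by the composition of `C`. -/
def aMul (C : RSemicat.{u, v, w} R Ob) (F K : aHom C) : aHom C :=
  DFinsupp.sum F fun p v => DFinsupp.sum K fun q w =>
    if h : p.2 = q.1 then
      DFinsupp.single (⟨p.1, q.2⟩ : Ob × Ob) (C.comp v (cast (by rw [h]) w : C.Hom p.2 q.2))
    else 0

/-- `a(C)_g = ⊕_{x,y} _yI^g_x` as a subset of `a(C)`. -/
def aIdealSet (C : RSemicat.{u, v, w} R Ob) (a : SemicatActionData R G C) (g : G) :
    Set (aHom C) :=
  {F | ∀ p : Ob × Ob, F p ∈ a.I g p.1 p.2}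

/-- The map `a(C)_{g⁻¹} → a(C)_g` induced componentwise by `α^g`. -/
def aAct {C : RSemicat.{u, v, w} R Ob} (a : SemicatActionData R G C) (g : G)
    (F : aHom C) : aHom C :=
  DFinsupp.sum F fun p v =>
    DFinsupp.single (⟨a.act₀ g p.1, a.act₀ g p.2⟩ : Ob × Ob) (a.act g v)

/-- A multiplier `(Rm, Lm)` of the (possibly non-unital) "ring" given by a
multiplication `mul` on the subset `A` of an additive group `M`. -/
def IsMultiplierOn {M : Type*} [AddCommGroup M] (mul : M → M → M) (A : Set M)
    (Rm Lm : M → M) : Prop :=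
  (∀ a ∈ A, Rm a ∈ A) ∧ (∀ a ∈ A, Lm a ∈ A) ∧
  (∀ a ∈ A, ∀ b ∈ A, Rm (a + b) = Rm a + Rm b) ∧
  (∀ a ∈ A, ∀ b ∈ A, Lm (a + b) = Lm a + Lm b) ∧
  (∀ a ∈ A, ∀ b ∈ A, Rm (mul a b) = mul a (Rm b)) ∧
  (∀ a ∈ A, ∀ b ∈ A, Lm (mul a b) = mul (Lm a) b) ∧
  (∀ a ∈ A, ∀ b ∈ A, mul (Rm a) b = mul a (Lm b))

/-- `(L, R)`-associativity: for any two multipliers `(Rm, Lm)` and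
`(Rm', Lm')` one has `Rm ∘ Lm' = Lm' ∘ Rm`. -/
def IsLRAssocOn {M : Type*} [AddCommGroup M] (mul : M → M → M) (A : Set M) : Prop :=
  ∀ Rm Lm Rm' Lm', IsMultiplierOn mul A Rm Lm → IsMultiplierOn mul A Rm' Lm' →
    ∀ a ∈ A, Rm (Lm' a) = Lm' (Rm a)

/-- `J` is a two-sided ideal of the "ring" `I ⊆ M` (with multiplication `mul`). -/
def IsRingIdealPair {M : Type*} [AddCommGroup M] (mul : M → M → M) (J I : Set M) : Prop :=
  J ⊆ I ∧ (0 : M) ∈ J ∧ (∀ a ∈ J, ∀ b ∈ J, a + b ∈ J) ∧ (∀ a ∈ J, -a ∈ J) ∧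
  (∀ a ∈ I, ∀ b ∈ J, mul a b ∈ J ∧ mul b a ∈ J)

/-- A partial action of a groupoid `𝒢` on the (possibly non-unital) ring
`(M, mul)`: ideals `D (r g) ⊴ M`, `D g ⊴ D (r g)` and ring isomorphisms
`act g : D g⁻¹ → D g` satisfying the partial action axioms. -/
def IsRingPartialAction {M : Type*} [AddCommGroup M] (𝒢 : AlgGroupoid G)
    (mul : M → M → M) (D : G → Set M) (act : G → M → M) : Prop :=
  (∀ g, IsRingIdealPair mul (D (𝒢.r g)) Set.univ) ∧
  (∀ g, IsRingIdealPair mul (D g) (D (𝒢.r g))) ∧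
  (∀ g, ∀ x ∈ D (𝒢.inv g), act g x ∈ D g) ∧
  (∀ g, ∀ x ∈ D (𝒢.inv g), act (𝒢.inv g) (act g x) = x) ∧
  (∀ g, ∀ y ∈ D g, ∃ x ∈ D (𝒢.inv g), act g x = y) ∧
  (∀ g, ∀ x ∈ D (𝒢.inv g), ∀ y ∈ D (𝒢.inv g), act g (x + y) = act g x + act g y) ∧
  (∀ g, ∀ x ∈ D (𝒢.inv g), ∀ y ∈ D (𝒢.inv g), act g (mul x y) = mul (act g x) (act g y)) ∧
  (∀ e ∈ 𝒢.units, ∀ x ∈ D e, act e x = x) ∧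
  (∀ g h, 𝒢.comp g h → ∀ x, x ∈ D (𝒢.inv g) → x ∈ D h →
      act (𝒢.inv h) x ∈ D (𝒢.inv (𝒢.mul g h))) ∧
  (∀ g h, 𝒢.comp g h → ∀ x ∈ D (𝒢.inv h), act h x ∈ D (𝒢.inv g) →
      act g (act h x) = act (𝒢.mul g h) x)

/-- A partial ring action is global when `α_g ∘ α_h = α_{gh}` for every
composable pair. -/
def RingActionIsGlobal {M : Type*} (𝒢 : AlgGroupoid G)
    (D : G → Set M) (act : G → M → M) : Prop :=
  ∀ g h, 𝒢.comp g h →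
    (∀ x, x ∈ D (𝒢.inv (𝒢.mul g h)) ↔ x ∈ D (𝒢.inv h) ∧ act h x ∈ D (𝒢.inv g)) ∧
    (∀ x ∈ D (𝒢.inv (𝒢.mul g h)), act g (act h x) = act (𝒢.mul g h) x)

end Algebra
section Globalization

variable {Ob' : Type v'}

/-- Membership in the image ideal `φ(I)` (inside the semicategory `D`),
with the convention that its components vanish away from the image of `ι`. -/
def ImageMem (C : RSemicat.{u, v, w} R Ob) (D : RSemicat.{u, v', w'} R Ob') (ι : Ob → Ob')
    (I : ∀ y x : Ob, Submodule R (C.Hom y x))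
    (φ : ∀ {y x : Ob}, C.Hom y x → D.Hom (ι y) (ι x))
    {z x' : Ob'} (k : D.Hom z x') : Prop :=
  k = 0 ∨ ∃ (y x : Ob) (f : C.Hom y x), f ∈ I y x ∧ ι y = z ∧ ι x = x' ∧ HEq (φ f) k

/-- The data of a (candidate) globalization of a partial action on `C`:
a global action on the semicategory `D`, an inclusion `ι : C₀ → D₀` of object
sets, and semifunctors `φ_e : I^e → J^e` acting as `ι` on objects. -/
structure GlobalizationData (R : Type u) [CommRing R] (G : Type u₂) {Ob : Type v}
    {Ob' : Type v'} (C : RSemicat.{u, v, w} R Ob) (D : RSemicat.{u, v', w'} R Ob') where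
  b : SemicatActionData R G D
  ι : Ob → Ob'
  φ : ∀ (e : G) {y x : Ob}, C.Hom y x → D.Hom (ι y) (ι x)

/-- `(D, β, (φ_e))` is a globalization of the partial groupoid action
`(C, α)` (Definition 3.2 of the paper). -/
def IsGlobalization (𝒢 : AlgGroupoid G) (C : RSemicat.{u, v, w} R Ob)
    (a : SemicatActionData R G C) (D : RSemicat.{u, v', w'} R Ob')
    (gd : GlobalizationData R G C D) : Prop :=
  Function.Injective gd.ι ∧
  -- β is a global action of 𝒢 on D
  IsSemicatPartialAction 𝒢 D gd.b ∧
  SemicatActionIsGlobal 𝒢 D gd.b ∧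
  -- (i) the object-level action β₀ is a globalization of α₀
  (∀ e ∈ 𝒢.units, ∀ x : Ob, x ∈ a.D₀ e ↔ gd.ι x ∈ gd.b.D₀ e) ∧
  (∀ g : G, ∀ x : Ob, x ∈ a.D₀ g ↔
      (gd.ι x ∈ gd.b.D₀ (𝒢.r g) ∧
        ∃ x' : Ob, gd.ι x' ∈ gd.b.D₀ (𝒢.d g) ∧ gd.b.act₀ g (gd.ι x') = gd.ι x)) ∧
  (∀ g : G, ∀ x ∈ a.D₀ (𝒢.inv g), gd.ι (a.act₀ g x) = gd.b.act₀ g (gd.ι x)) ∧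
  -- (ii) each φ_e is a faithful semifunctor with φ_e(I^e) ⊴ J^e
  (∀ e ∈ 𝒢.units,
    (∀ (y x : Ob) (f f' : C.Hom y x), f ∈ a.I e y x → f' ∈ a.I e y x →
        gd.φ e (f + f') = gd.φ e f + gd.φ e f') ∧
    (∀ (y x : Ob) (c : R) (f : C.Hom y x), f ∈ a.I e y x →
        gd.φ e (c • f) = c • gd.φ e f) ∧
    (∀ (z y x : Ob) (f : C.Hom z y) (f' : C.Hom y x), f ∈ a.I e z y → f' ∈ a.I e y x →
        gd.φ e (C.comp f f') = D.comp (gd.φ e f) (gd.φ e f')) ∧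
    (∀ (y x : Ob) (f f' : C.Hom y x), f ∈ a.I e y x → f' ∈ a.I e y x →
        gd.φ e f = gd.φ e f' → f = f') ∧
    (∀ (y x : Ob) (f : C.Hom y x), f ∈ a.I e y x →
        gd.φ e f ∈ gd.b.I e (gd.ι y) (gd.ι x))) ∧
  (∀ e ∈ 𝒢.units, ∀ (w z x' : Ob') (u : D.Hom w z) (k : D.Hom z x'),
      u ∈ gd.b.I e w z → ImageMem C D gd.ι (a.I e) (gd.φ e) k →
      ImageMem C D gd.ι (a.I e) (gd.φ e) (D.comp u k)) ∧
  (∀ e ∈ 𝒢.units, ∀ (z x' w : Ob') (k : D.Hom z x') (u : D.Hom x' w),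
      ImageMem C D gd.ι (a.I e) (gd.φ e) k → u ∈ gd.b.I e x' w →
      ImageMem C D gd.ι (a.I e) (gd.φ e) (D.comp k u)) ∧
  -- (iii) φ_{r g}(_yI^g_x) = φ_{r g}(_yI^{r g}_x) ∩ β^g(φ_{d g}(_{g⁻¹y}I^{d g}_{g⁻¹x}))
  (∀ g : G, ∀ y ∈ a.D₀ g, ∀ x ∈ a.D₀ g, ∀ k : D.Hom (gd.ι y) (gd.ι x),
      (∃ f ∈ a.I g y x, gd.φ (𝒢.r g) f = k) ↔
        ((∃ f ∈ a.I (𝒢.r g) y x, gd.φ (𝒢.r g) f = k) ∧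
          ∃ f' : C.Hom (a.act₀ (𝒢.inv g) y) (a.act₀ (𝒢.inv g) x),
            f' ∈ a.I (𝒢.d g) (a.act₀ (𝒢.inv g) y) (a.act₀ (𝒢.inv g) x) ∧
            HEq (gd.b.act g (gd.φ (𝒢.d g) f')) k)) ∧
  -- (iv) β^g ∘ φ_{d g} = φ_{r g} ∘ α^g on I^{g⁻¹}
  (∀ (g : G) (y x : Ob) (f : C.Hom y x), f ∈ a.I (𝒢.inv g) y x →
      HEq (gd.b.act g (gd.φ (𝒢.d g) f)) (gd.φ (𝒢.r g) (a.act g f))) ∧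
  -- (v) _yJ^g_x = Σ_{r h = r g} β^h(φ_{d h}(_{h⁻¹y}I^{d h}_{h⁻¹x}))
  (∀ (g : G) (y x : Ob'), gd.b.I g y x = Submodule.span R
      {m : D.Hom y x | ∃ h : G, 𝒢.r h = 𝒢.r g ∧
        ∃ (y' x' : Ob) (f : C.Hom y' x'), f ∈ a.I (𝒢.d h) y' x' ∧
          gd.ι y' = gd.b.act₀ (𝒢.inv h) y ∧ gd.ι x' = gd.b.act₀ (𝒢.inv h) x ∧
          HEq (gd.b.act h (gd.φ (𝒢.d h) f)) m})

/-- The ring homomorphism `ψ_e : a(C) → a(D)` induced componentwise by a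
semifunctor `φ_e`. -/
def aPhiRing {C : RSemicat.{u, v, w} R Ob} {D : RSemicat.{u, v', w'} R Ob'}
    (ι : Ob → Ob') (φ : ∀ (e : G) {y x : Ob}, C.Hom y x → D.Hom (ι y) (ι x))
    (e : G) (F : aHom C) : aHom D :=
  DFinsupp.sum F fun p v => DFinsupp.single (⟨ι p.1, ι p.2⟩ : Ob' × Ob') (φ e v)

/-- A global action `(DN, actN)` of `𝒢` on the ring `(N, mulN)` is a
globalization of the partial ring action `(DM, actM)` of `𝒢` on `(M, mulM)`
via the ring monomorphisms `ψ_e` (Definition 3.1 of the paper). -/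
def IsRingGlobalization {M N : Type*} [AddCommGroup M] [AddCommGroup N]
    (𝒢 : AlgGroupoid G)
    (mulM : M → M → M) (DM : G → Set M) (actM : G → M → M)
    (mulN : N → N → N) (DN : G → Set N) (actN : G → N → N)
    (ψ : G → M → N) : Prop :=
  IsRingPartialAction 𝒢 mulN DN actN ∧
  RingActionIsGlobal 𝒢 DN actN ∧
  (∀ e ∈ 𝒢.units,
    (∀ x ∈ DM e, ψ e x ∈ DN e) ∧
    (∀ x ∈ DM e, ∀ y ∈ DM e, ψ e (x + y) = ψ e x + ψ e y) ∧
    (∀ x ∈ DM e, ∀ y ∈ DM e, ψ e (mulM x y) = mulN (ψ e x) (ψ e y)) ∧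
    (∀ x ∈ DM e, ∀ y ∈ DM e, ψ e x = ψ e y → x = y) ∧
    -- (i) ψ_e(A_e) is an ideal of B_e
    IsRingIdealPair mulN (ψ e '' DM e) (DN e)) ∧
  -- (ii)
  (∀ g : G, ψ (𝒢.r g) '' DM g =
      (ψ (𝒢.r g) '' DM (𝒢.r g)) ∩ (actN g '' (ψ (𝒢.d g) '' DM (𝒢.d g)))) ∧
  -- (iii)
  (∀ g : G, ∀ x ∈ DM (𝒢.inv g), actN g (ψ (𝒢.d g) x) = ψ (𝒢.r g) (actM g x)) ∧
  -- (iv)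
  (∀ g : G, ∀ k : N, k ∈ DN g ↔ k ∈ AddSubgroup.closure
      {m : N | ∃ h : G, 𝒢.r h = 𝒢.r g ∧ ∃ F ∈ DM (𝒢.d h), m = actN h (ψ (𝒢.d h) F)})

end Globalization

section Orbits

/-- The orbit relation induced by a partial action of a groupoid: `e ∼ f`
iff `f = g e` for some morphism `g` with `e` in the domain of `α_g`. -/
def orbRel {Y : Type*} (𝒢 : AlgGroupoid G) (D : G → Set Y) (act : G → Y → Y)
    (e f : Y) : Prop :=
  ∃ g : G, e ∈ D (𝒢.inv g) ∧ act g e = f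

/-- `C(ρ,τ)_g = ⊕_{x ∈ ρ, y ∈ τ} _yI^g_x`, realized inside `a(C)`. -/
def CSet (C : RSemicat.{u, v, w} R Ob) (a : SemicatActionData R G C)
    (ρ τ : Set Ob) (g : G) : Set (aHom C) :=
  {F | ∀ p : Ob × Ob, F p ∈ a.I g p.1 p.2 ∧ (F p ≠ 0 → p.1 ∈ τ ∧ p.2 ∈ ρ)}

end Orbits
section SkewCatAlgebra

/-- The morphism module `_y(C∗_α𝒢)_x = ⊕_{g} _yI^g_{gx}` of the partial skew
groupoid semicategory (realized as a direct sum over all of `G`; the genuine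
morphisms are those supported on `𝒢^x` with components in `I^g`). -/
abbrev SkewHomT (C : RSemicat.{u, v, w} R Ob) (a : SemicatActionData R G C)
    (y x : Ob) : Type (max u₂ w) :=
  Π₀ g : G, C.Hom y (a.act₀ g x)

/-- Composition in the partial skew groupoid semicategory `C∗_α𝒢`. -/
def skewHomMul (𝒢 : AlgGroupoid G) (C : RSemicat.{u, v, w} R Ob)
    (a : SemicatActionData R G C) {z y x : Ob}
    (F : SkewHomT C a z y) (K : SkewHomT C a y x) : SkewHomT C a z x :=
  DFinsupp.sum F fun t f => DFinsupp.sum K fun g l =>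
    DFinsupp.single (𝒢.mul t g) (skewMul 𝒢 C a t g f l)

/-- The underlying module of the algebra `a(C∗_α𝒢)`. -/
abbrev aSkewT (C : RSemicat.{u, v, w} R Ob) (a : SemicatActionData R G C) :
    Type (max v u₂ w) :=
  Π₀ p : Ob × Ob, SkewHomT C a p.1 p.2

/-- The multiplication of the algebra `a(C∗_α𝒢)`. -/
def aSkewMul (𝒢 : AlgGroupoid G) (C : RSemicat.{u, v, w} R Ob)
    (a : SemicatActionData R G C) (F K : aSkewT C a) : aSkewT C a :=
  DFinsupp.sum F fun p u => DFinsupp.sum K fun q v =>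
    if h : p.2 = q.1 then
      DFinsupp.single (⟨p.1, q.2⟩ : Ob × Ob)
        (skewHomMul 𝒢 C a u (cast (by rw [h]) v : SkewHomT C a p.2 q.2))
    else 0

/-- The set of genuine elements of `a(C∗_α𝒢)` inside `aSkewT`. -/
def aSkewSet (𝒢 : AlgGroupoid G) (C : RSemicat.{u, v, w} R Ob)
    (a : SemicatActionData R G C) : Set (aSkewT C a) :=
  {F | ∀ (p : Ob × Ob) (g : G), F p g ∈ a.I g p.1 (a.act₀ g p.2) ∧
    (p.2 ∉ a.D₀ (𝒢.inv g) → F p g = 0)}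

/-- The underlying module of the partial skew groupoid ring
`a(C)∗_α𝒢 = ⊕_g a(C)_g δ_g`. -/
abbrev sRingT (G : Type u₂) (C : RSemicat.{u, v, w} R Ob) : Type (max v u₂ w) :=
  Π₀ _g : G, aHom C

/-- The multiplication of the partial skew groupoid ring `a(C)∗_α𝒢`:
`(a_g δ_g)(b_h δ_h) = α_g(α_{g⁻¹}(a_g) b_h) δ_{gh}` when `(g,h)` is
composable, and `0` otherwise. -/
def sRingMul (𝒢 : AlgGroupoid G) (C : RSemicat.{u, v, w} R Ob)
    (a : SemicatActionData R G C) (F K : sRingT G C) : sRingT G C :=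
  DFinsupp.sum F fun g ag => DFinsupp.sum K fun h bh =>
    if 𝒢.comp g h then
      DFinsupp.single (𝒢.mul g h) (aAct a g (aMul C (aAct a (𝒢.inv g) ag) bh))
    else 0

/-- The set of genuine elements of `a(C)∗_α𝒢` inside `sRingT`. -/
def sRingSet (C : RSemicat.{u, v, w} R Ob) (a : SemicatActionData R G C) :
    Set (sRingT G C) :=
  {K | ∀ (g : G) (p : Ob × Ob), K g p ∈ a.I g p.1 p.2}

/-- The isomorphism `a(C∗_α𝒢) → a(C)∗_α𝒢`, `f_g ↦ f_g δ_g`. -/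
def aPhi (C : RSemicat.{u, v, w} R Ob) (a : SemicatActionData R G C)
    (F : aSkewT C a) : sRingT G C :=
  DFinsupp.sum F fun p u => DFinsupp.sum u fun g f =>
    DFinsupp.single g (DFinsupp.single (⟨p.1, a.act₀ g p.2⟩ : Ob × Ob) f)

end SkewCatAlgebra

section Graded

/-- A `𝒢`-grading of an `R`-semicategory `B`: decompositions
`_yB_x = ⊕_{g} _yB_x^g` such that `_zB_y^t ⬝ _yB_x^s ⊆ _zB_x^{ts}` when
`d t = r s` and `_zB_y^t ⬝ _yB_x^s = 0` otherwise. -/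
def IsGrading (𝒢 : AlgGroupoid G) (B : RSemicat.{u, v, w} R Ob)
    (deco : ∀ y x : Ob, G → Submodule R (B.Hom y x)) : Prop :=
  (∀ y x : Ob, DirectSum.IsInternal fun g : G => deco y x g) ∧
  (∀ (z y x : Ob) (t s : G), 𝒢.comp t s → ∀ u ∈ deco z y t, ∀ v ∈ deco y x s,
      B.comp u v ∈ deco z x (𝒢.mul t s)) ∧
  (∀ (z y x : Ob) (t s : G), ¬ 𝒢.comp t s → ∀ u ∈ deco z y t, ∀ v ∈ deco y x s,
      B.comp u v = 0)

/-- The morphism submodule `_{(y,t)}(B#𝒢)_{(x,s)}` of the smash product: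
`_yB_x^{t⁻¹ s}` when `r t = r s`, and `0` otherwise. -/
def smashMod (𝒢 : AlgGroupoid G) (B : RSemicat.{u, v, w} R Ob)
    (deco : ∀ y x : Ob, G → Submodule R (B.Hom y x))
    (yt xs : Ob × G) : Submodule R (B.Hom yt.1 xs.1) :=
  if 𝒢.r yt.2 = 𝒢.r xs.2 then deco yt.1 xs.1 (𝒢.mul (𝒢.inv yt.2) xs.2) else ⊥

/-- The smash product `R`-semicategory `B#𝒢`. -/
def Smash (𝒢 : AlgGroupoid G) (B : RSemicat.{u, v, w} R Ob)
    (deco : ∀ y x : Ob, G → Submodule R (B.Hom y x))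
    (hgr : IsGrading 𝒢 B deco) :
    RSemicat.{u, max v u₂, w} R (Ob × G) where
  Hom yt xs := ↥(smashMod 𝒢 B deco yt xs)
  comp {z y x} f g := ⟨B.comp f.1 g.1, by
    obtain ⟨fv, hf⟩ := f
    obtain ⟨gv, hg⟩ := g
    show B.comp fv gv ∈ smashMod 𝒢 B deco z x
    unfold smashMod at hf hg ⊢
    by_cases h1 : 𝒢.r z.2 = 𝒢.r y.2
    · by_cases h2 : 𝒢.r y.2 = 𝒢.r x.2
      · rw [if_pos h1] at hf
        rw [if_pos h2] at hg
        rw [if_pos (h1.trans h2)]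
        have c1 : 𝒢.comp (𝒢.inv z.2) y.2 :=
          (𝒢.comp_iff _ _).2 (by rw [𝒢.inv_inv']; exact h1)
        have c2 : 𝒢.comp (𝒢.inv y.2) x.2 :=
          (𝒢.comp_iff _ _).2 (by rw [𝒢.inv_inv']; exact h2)
        have ccy : 𝒢.comp y.2 (𝒢.inv y.2) := 𝒢.comp_inv_right y.2
        have ccyc : 𝒢.comp y.2 (𝒢.mul (𝒢.inv y.2) x.2) :=
          𝒢.comp_mul_right y.2 (𝒢.inv y.2) x.2 ccy c2
        have hcomp : 𝒢.comp (𝒢.mul (𝒢.inv z.2) y.2) (𝒢.mul (𝒢.inv y.2) x.2) :=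
          𝒢.comp_mul_left (𝒢.inv z.2) y.2 (𝒢.mul (𝒢.inv y.2) x.2) c1 ccyc
        have hmem := hgr.2.1 z.1 y.1 x.1 (𝒢.mul (𝒢.inv z.2) y.2)
          (𝒢.mul (𝒢.inv y.2) x.2) hcomp fv hf gv hg
        have h2' : 𝒢.mul y.2 (𝒢.inv y.2) = 𝒢.mul x.2 (𝒢.inv x.2) := h2
        have s5 : 𝒢.mul x.2 (𝒢.mul (𝒢.inv x.2) x.2) = x.2 := by
          have h5 := 𝒢.inv_mul_cancel' (𝒢.inv x.2) x.2 (𝒢.comp_inv_left x.2)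
          rwa [𝒢.inv_inv'] at h5
        have hidx : 𝒢.mul (𝒢.mul (𝒢.inv z.2) y.2) (𝒢.mul (𝒢.inv y.2) x.2) =
            𝒢.mul (𝒢.inv z.2) x.2 := by
          rw [𝒢.mul_assoc' (𝒢.inv z.2) y.2 (𝒢.mul (𝒢.inv y.2) x.2) c1 ccyc,
            ← 𝒢.mul_assoc' y.2 (𝒢.inv y.2) x.2 ccy c2, h2',
            𝒢.mul_assoc' x.2 (𝒢.inv x.2) x.2 (𝒢.comp_inv_right x.2) (𝒢.comp_inv_left x.2),
            s5]
        rw [hidx] at hmem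
        exact hmem
      · rw [if_neg h2] at hg
        have hg0 : gv = 0 := by simpa using hg
        rw [hg0, B.comp_zero_right]
        exact Submodule.zero_mem _
    · rw [if_neg h1] at hf
      have hf0 : fv = 0 := by simpa using hf
      rw [hf0, B.comp_zero_left]
      exact Submodule.zero_mem _⟩
  comp_assoc f g h := Subtype.ext (B.comp_assoc f.1 g.1 h.1)
  comp_add_left f f' g := Subtype.ext (B.comp_add_left f.1 f'.1 g.1)
  comp_add_right f g g' := Subtype.ext (B.comp_add_right f.1 g.1 g'.1)
  comp_smul_left c f g := Subtype.ext (B.comp_smul_left c f.1 g.1)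
  comp_smul_right c f g := Subtype.ext (B.comp_smul_right c f.1 g.1)

/-- The object part of the global action of `𝒢` on `B#𝒢`:
`α₀^g (x, s) = (x, g s)`. -/
def smashAct₀ (𝒢 : AlgGroupoid G) (g : G) (p : Ob × G) : Ob × G :=
  (p.1, 𝒢.mul g p.2)

/-- The global action of `𝒢` on the smash product `B#𝒢` (domains
`B₀ × 𝒢(-, r g)`, `α₀^g(x,s) = (x, gs)`, ideals `_{(y,t)}I^g_{(x,s)}`
given by `_yB_x^{t⁻¹s}` when `r t = r s = r g` and `0` otherwise, and `α^g`
given by the identity on the underlying morphisms of `B`). -/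
def smashActionData (𝒢 : AlgGroupoid G) (B : RSemicat.{u, v, w} R Ob)
    (deco : ∀ y x : Ob, G → Submodule R (B.Hom y x))
    (hgr : IsGrading 𝒢 B deco) :
    SemicatActionData R G (Smash 𝒢 B deco hgr) where
  D₀ g := {p : Ob × G | 𝒢.r p.2 = 𝒢.r g}
  act₀ := smashAct₀ 𝒢
  I g yt xs := if 𝒢.r yt.2 = 𝒢.r g ∧ 𝒢.r xs.2 = 𝒢.r g then ⊤ else ⊥
  act g {yt xs} f :=
    if h : (f.1 : B.Hom yt.1 xs.1) ∈
        smashMod 𝒢 B deco (smashAct₀ 𝒢 g yt) (smashAct₀ 𝒢 g xs) then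
      ⟨f.1, h⟩
    else 0

end Graded

section Stmt10Helpers

namespace AlgGroupoid

variable {G : Type u₂} (𝒢 : AlgGroupoid G)

lemma g_mul_d (t : G) : 𝒢.mul t (𝒢.d t) = t := by
  have h := 𝒢.inv_mul_cancel' (𝒢.inv t) t (𝒢.comp_inv_left t)
  rwa [𝒢.inv_inv'] at h

lemma g_r_mul (s : G) : 𝒢.mul (𝒢.r s) s = s := by
  have h := 𝒢.mul_inv_cancel' s (𝒢.inv s) (𝒢.comp_inv_right s)
  rwa [𝒢.inv_inv'] at h

lemma g_inv_d (t : G) : 𝒢.inv (𝒢.d t) = 𝒢.d t := by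
  have h := 𝒢.inv_mul' (𝒢.inv t) t (𝒢.comp_inv_left t)
  rwa [𝒢.inv_inv'] at h

lemma g_comp_d' (t : G) : 𝒢.comp t (𝒢.d t) :=
  𝒢.comp_mul_right t (𝒢.inv t) t (𝒢.comp_inv_right t) (𝒢.comp_inv_left t)

lemma g_d_idem (t : G) : 𝒢.mul (𝒢.d t) (𝒢.d t) = 𝒢.d t := by
  have ha := 𝒢.mul_assoc' (𝒢.inv t) t (𝒢.d t) (𝒢.comp_inv_left t) (𝒢.g_comp_d' t)
  rw [𝒢.g_mul_d] at ha
  exact ha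

lemma g_comp_d (t : G) : 𝒢.comp t (𝒢.d t) := by
  refine (𝒢.comp_iff t (𝒢.d t)).2 ?_
  rw [g_inv_d, g_d_idem]
  rfl

lemma g_r_eq_d_inv (t : G) : 𝒢.r t = 𝒢.d (𝒢.inv t) := by
  show 𝒢.mul t (𝒢.inv t) = 𝒢.mul (𝒢.inv (𝒢.inv t)) (𝒢.inv t)
  rw [𝒢.inv_inv']

lemma g_d_eq_r_inv (t : G) : 𝒢.d t = 𝒢.r (𝒢.inv t) := by
  show 𝒢.mul (𝒢.inv t) t = 𝒢.mul (𝒢.inv t) (𝒢.inv (𝒢.inv t))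
  rw [𝒢.inv_inv']

lemma g_d_unit (t : G) : 𝒢.d t ∈ 𝒢.units := ⟨t, rfl⟩

lemma g_r_unit (t : G) : 𝒢.r t ∈ 𝒢.units := ⟨𝒢.inv t, 𝒢.g_r_eq_d_inv t⟩

lemma g_unit_inv {e : G} (he : e ∈ 𝒢.units) : 𝒢.inv e = e := by
  obtain ⟨g, rfl⟩ := he
  exact 𝒢.g_inv_d g

lemma g_unit_mul {e : G} (he : e ∈ 𝒢.units) : 𝒢.mul e e = e := by
  obtain ⟨g, rfl⟩ := he
  exact 𝒢.g_d_idem g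

lemma g_unit_d {e : G} (he : e ∈ 𝒢.units) : 𝒢.d e = e := by
  show 𝒢.mul (𝒢.inv e) e = e
  rw [𝒢.g_unit_inv he]
  exact 𝒢.g_unit_mul he

lemma g_unit_r {e : G} (he : e ∈ 𝒢.units) : 𝒢.r e = e := by
  show 𝒢.mul e (𝒢.inv e) = e
  rw [𝒢.g_unit_inv he]
  exact 𝒢.g_unit_mul he

lemma g_r_comp (s : G) : 𝒢.comp (𝒢.r s) s := by
  refine (𝒢.comp_iff (𝒢.r s) s).2 ?_
  show 𝒢.mul (𝒢.inv (𝒢.r s)) (𝒢.r s) = 𝒢.r s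
  rw [𝒢.g_unit_inv (𝒢.g_r_unit s)]
  exact 𝒢.g_unit_mul (𝒢.g_r_unit s)

lemma g_comp_unit_iff {t e : G} (he : e ∈ 𝒢.units) : 𝒢.comp t e ↔ 𝒢.d t = e := by
  rw [𝒢.comp_iff]
  show 𝒢.d t = 𝒢.r e ↔ _
  rw [𝒢.g_unit_r he]

lemma g_unit_comp_iff {s e : G} (he : e ∈ 𝒢.units) : 𝒢.comp e s ↔ e = 𝒢.r s := by
  rw [𝒢.comp_iff]
  show 𝒢.d e = 𝒢.r s ↔ _
  rw [𝒢.g_unit_d he]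

end AlgGroupoid

namespace RSemicat

variable {R : Type u} [CommRing R] {Ob : Type v}

lemma cast_hom_zero₂ (C : RSemicat.{u, v, w} R Ob) {z z' w w' : Ob}
    (hz : z = z') (hw : w = w') (h : C.Hom z w = C.Hom z' w') :
    cast h (0 : C.Hom z w) = 0 := by
  subst hz; subst hw; exact cast_eq _ _

lemma zero_heq_zero (C : RSemicat.{u, v, w} R Ob) {z z' w w' : Ob}
    (hz : z = z') (hw : w = w') :
    HEq (0 : C.Hom z w) (0 : C.Hom z' w') := by
  subst hz; subst hw; rfl

lemma comp_congr (C : RSemicat.{u, v, w} R Ob) {z z' y y' x x' : Ob}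
    (hz : z = z') (hy : y = y') (hx : x = x')
    {f : C.Hom z y} {f' : C.Hom z' y'} {g : C.Hom y x} {g' : C.Hom y' x'}
    (hf : HEq f f') (hg : HEq g g') : HEq (C.comp f g) (C.comp f' g') := by
  subst hz; subst hy; subst hx
  rw [eq_of_heq hf, eq_of_heq hg]

lemma mem_of_heq (C : RSemicat.{u, v, w} R Ob)
    (I : ∀ y x : Ob, Submodule R (C.Hom y x)) {y x x' : Ob} (hx : x = x')
    {f : C.Hom y x} {f' : C.Hom y x'} (h : HEq f' f) (hf : f ∈ I y x) :
    f' ∈ I y x' := by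
  subst hx
  rw [eq_of_heq h]
  exact hf

lemma mem_of_heq₂ (C : RSemicat.{u, v, w} R Ob)
    (I : ∀ y x : Ob, Submodule R (C.Hom y x)) {y y' x x' : Ob}
    (hy : y = y') (hx : x = x')
    {f : C.Hom y x} {f' : C.Hom y' x'} (h : HEq f' f) (hf : f ∈ I y x) :
    f' ∈ I y' x' := by
  subst hy; subst hx
  rw [eq_of_heq h]
  exact hf

end RSemicat

lemma act_congr {R : Type u} [CommRing R] {G : Type u₂} {Ob : Type v}
    {C : RSemicat.{u, v, w} R Ob} (a : SemicatActionData R G C) (t : G)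
    {y y' x x' : Ob} (hy : y = y') (hx : x = x')
    {f : C.Hom y x} {f' : C.Hom y' x'} (hf : HEq f f') :
    HEq (a.act t f) (a.act t f') := by
  subst hy; subst hx
  rw [eq_of_heq hf]

end Stmt10Helpers

/-- Let `α` be an associative partial action of a groupoid
`𝒢` on an `R`-semicategory `C` with `𝒢₀` finite, such that for every
`x ∈ C₀` and `e ∈ 𝒢₀ ∩ 𝒢^x` the ideal `_xI^e_x` has a local identity.
Then `C ∗_α 𝒢` is an `R`-category: at each object `x` the morphism
`u = Σ_{e ∈ 𝒢₀ ∩ 𝒢^x} 1^e_x` (whose `e`-component is the local identity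
`1^e_x`) satisfies `f u = f` and `u k = k` for all morphisms `f, k` of
`C ∗_α 𝒢` with target resp. source `x`. -/
theorem stmt10 {R : Type u} [CommRing R] {G : Type u₂} {Ob : Type v}
    (𝒢 : AlgGroupoid G) (C : RSemicat.{u, v, w} R Ob) (a : SemicatActionData R G C)
    (hpa : IsSemicatPartialAction 𝒢 C a) (hassoc : SkewAssoc 𝒢 C a)
    (hfin : (𝒢.units).Finite)
    (hloc : ∀ (x : Ob) (e : G), e ∈ 𝒢.units → x ∈ a.D₀ (𝒢.inv e) →
      ∃ u ∈ a.I e x x, C.IsLocalIdentity (a.I e) x u) :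
    ∀ x : Ob, ∃ u : ∀ e : G, C.Hom x (a.act₀ e x),
      (∀ e : G, (e ∈ 𝒢.units ∧ x ∈ a.D₀ (𝒢.inv e)) →
        u e ∈ a.I e x (a.act₀ e x) ∧
        ∃ v ∈ a.I e x x, C.IsLocalIdentity (a.I e) x v ∧ HEq (u e) v) ∧
      (∀ e : G, ¬(e ∈ 𝒢.units ∧ x ∈ a.D₀ (𝒢.inv e)) → u e = 0) ∧
      -- `f u = f` componentwise: the `d t`-component of `u` acts as a right
      -- identity and all other components multiply to `0`
      (∀ (t : G) (z : Ob) (f : C.Hom z (a.act₀ t x)),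
        x ∈ a.D₀ (𝒢.inv t) → f ∈ a.I t z (a.act₀ t x) →
          HEq (skewMul 𝒢 C a t (𝒢.d t) f (u (𝒢.d t))) f ∧
          ∀ e : G, e ≠ 𝒢.d t → skewMul 𝒢 C a t e f (u e) = 0) ∧
      -- `u k = k` componentwise
      (∀ (s : G) (z : Ob) (k : C.Hom x (a.act₀ s z)),
        z ∈ a.D₀ (𝒢.inv s) → k ∈ a.I s x (a.act₀ s z) →
          HEq (skewMul 𝒢 C a (𝒢.r s) s (u (𝒢.r s)) k) k ∧
          ∀ e : G, e ≠ 𝒢.r s → skewMul 𝒢 C a e s (u e) k = 0) := by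
  obtain ⟨hset, hbot, hidealin, hideal, hactmem, hactadd, hactsmul, hactinj, hactsurj,
    hactcomp, hactunit, hact5, hact6⟩ := hpa
  obtain ⟨hsub, hDr, hex, hid, hmem0, hinv2, himg, hcompat⟩ := hset
  intro x
  have hactzero : ∀ (g : G) (y x' : Ob), a.act g (0 : C.Hom y x') = 0 := by
    intro g y x'
    have h := hactadd g y x' 0 0 (Submodule.zero_mem _) (Submodule.zero_mem _)
    rw [add_zero] at h
    exact left_eq_add.mp h
  have hsm0r : ∀ (t g : G) (z y x' : Ob) (f : C.Hom z (a.act₀ t y)),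
      skewMul 𝒢 C a t g f (0 : C.Hom y (a.act₀ g x')) = 0 := by
    intro t g z y x' f
    unfold skewMul
    split
    · next h =>
      rw [C.comp_zero_right, hactzero]
      exact C.cast_hom_zero₂ h.2.2.2.1 h.2.2.2.2 _
    · rfl
  have hsm0l : ∀ (t g : G) (z y x' : Ob) (l : C.Hom y (a.act₀ g x')),
      skewMul 𝒢 C a t g (0 : C.Hom z (a.act₀ t y)) l = 0 := by
    intro t g z y x' l
    unfold skewMul
    split
    · next h =>
      rw [hactzero, C.cast_hom_zero₂ rfl h.2.2.1 _, C.comp_zero_left, hactzero]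
      exact C.cast_hom_zero₂ h.2.2.2.1 h.2.2.2.2 _
    · rfl
  have hxe : ∀ e : G, e ∈ 𝒢.units → x ∈ a.D₀ (𝒢.inv e) → x ∈ a.D₀ e := by
    intro e he hx
    rwa [𝒢.g_unit_inv he] at hx
  have hact0x : ∀ (e : G), e ∈ 𝒢.units → x ∈ a.D₀ (𝒢.inv e) → a.act₀ e x = x := by
    intro e he hx
    exact hid e he x (hxe e he hx)
  refine ⟨fun e =>
    if h : e ∈ 𝒢.units ∧ x ∈ a.D₀ (𝒢.inv e) then
      cast (by rw [hact0x e h.1 h.2]) (hloc x e h.1 h.2).choose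
    else 0, ?_, ?_, ?_, ?_⟩
  · -- components of u
    intro e he
    beta_reduce
    rw [dif_pos he]
    obtain ⟨hv1, hv2⟩ := (hloc x e he.1 he.2).choose_spec
    exact ⟨C.mem_of_heq (a.I e) (hact0x e he.1 he.2).symm (cast_heq _ _) hv1,
      (hloc x e he.1 he.2).choose, hv1, hv2, cast_heq _ _⟩
  · intro e he
    exact dif_neg he
  · -- f u = f
    intro t z f hx hf
    constructor
    · by_cases hf0 : f = 0
      · subst hf0
        rw [hsm0l]
        exact C.zero_heq_zero rfl (by rw [𝒢.g_mul_d])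
      · have hzx : z ∈ a.D₀ t ∧ a.act₀ t x ∈ a.D₀ t := by
          by_contra hc
          rw [hbot t z (a.act₀ t x) hc] at hf
          exact hf0 ((Submodule.mem_bot R).1 hf)
        have hmt : 𝒢.mul t (𝒢.d t) = t := 𝒢.g_mul_d t
        have hxd : x ∈ a.D₀ (𝒢.d t) := by
          have h := hDr (𝒢.inv t) hx
          rwa [← 𝒢.g_d_eq_r_inv] at h
        have hed : 𝒢.d t ∈ 𝒢.units ∧ x ∈ a.D₀ (𝒢.inv (𝒢.d t)) :=
          ⟨𝒢.g_d_unit t, by rw [𝒢.g_inv_d]; exact hxd⟩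
        have hxe0 : a.act₀ (𝒢.d t) x = x := hid (𝒢.d t) (𝒢.g_d_unit t) x hxd
        have h3 : a.act₀ (𝒢.inv t) (a.act₀ t x) = x := hinv2 t x hx
        have hcond : 𝒢.comp t (𝒢.d t) ∧ x ∈ a.D₀ (𝒢.inv (𝒢.mul t (𝒢.d t))) ∧
            a.act₀ (𝒢.inv t) (a.act₀ t x) = x ∧ a.act₀ t (a.act₀ (𝒢.inv t) z) = z ∧
            a.act₀ t (a.act₀ (𝒢.d t) x) = a.act₀ (𝒢.mul t (𝒢.d t)) x := by
          refine ⟨𝒢.g_comp_d t, by rw [hmt]; exact hx, h3, ?_, by rw [hxe0, hmt]⟩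
          have h := hinv2 (𝒢.inv t) z (by rw [𝒢.inv_inv']; exact hzx.1)
          rwa [𝒢.inv_inv'] at h
        beta_reduce
        unfold skewMul
        rw [dif_pos hcond, dif_pos hed]
        obtain ⟨hv1, hvl, hvr⟩ := (hloc x (𝒢.d t) hed.1 hed.2).choose_spec
        set v := (hloc x (𝒢.d t) hed.1 hed.2).choose with hvdef
        have hft : f ∈ a.I (𝒢.inv (𝒢.inv t)) z (a.act₀ t x) := by rwa [𝒢.inv_inv']
        have hf' : a.act (𝒢.inv t) f ∈
            a.I (𝒢.inv t) (a.act₀ (𝒢.inv t) z) (a.act₀ (𝒢.inv t) (a.act₀ t x)) :=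
          hactmem (𝒢.inv t) z (a.act₀ t x) f hft
        have q' : C.Hom (a.act₀ (𝒢.inv t) z) (a.act₀ (𝒢.inv t) (a.act₀ t x))
            = C.Hom (a.act₀ (𝒢.inv t) z) x := by rw [h3]
        have r'' : C.Hom x x = C.Hom x (a.act₀ (𝒢.d t) x) := by rw [hxe0]
        have hcq : cast q' (a.act (𝒢.inv t) f) ∈ a.I (𝒢.inv t) (a.act₀ (𝒢.inv t) z) x :=
          C.mem_of_heq (a.I (𝒢.inv t)) h3 (cast_heq _ _) hf'
        have hcqe : cast q' (a.act (𝒢.inv t) f) ∈ a.I (𝒢.d t) (a.act₀ (𝒢.inv t) z) x := by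
          rw [𝒢.g_d_eq_r_inv]
          exact (hidealin (𝒢.inv t)).1 _ _ hcq
        have hcomp1 : C.comp (cast q' (a.act (𝒢.inv t) f)) v = cast q' (a.act (𝒢.inv t) f) :=
          hvr _ _ hcqe
        have s1 : HEq (C.comp (cast q' (a.act (𝒢.inv t) f)) (cast r'' v))
            (cast q' (a.act (𝒢.inv t) f)) :=
          HEq.trans (C.comp_congr rfl rfl hxe0 (HEq.refl _) (cast_heq _ _)) (heq_of_eq hcomp1)
        have s2 : HEq (a.act t (C.comp (cast q' (a.act (𝒢.inv t) f)) (cast r'' v)))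
            (a.act t (cast q' (a.act (𝒢.inv t) f))) :=
          act_congr a t rfl hxe0 s1
        have s3 : HEq (a.act t (cast q' (a.act (𝒢.inv t) f))) (a.act t (a.act (𝒢.inv t) f)) :=
          act_congr a t rfl h3.symm (cast_heq _ _)
        have s4 : HEq (a.act t (a.act (𝒢.inv t) f)) (a.act (𝒢.mul t (𝒢.inv t)) f) :=
          hact6 t (𝒢.inv t) (𝒢.comp_inv_right t) z (a.act₀ t x) f hft hf'
        have s5 : HEq (a.act (𝒢.mul t (𝒢.inv t)) f) f :=
          hactunit (𝒢.mul t (𝒢.inv t)) (𝒢.g_r_unit t) z (a.act₀ t x) f ((hidealin t).1 _ _ hf)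
        exact HEq.trans (cast_heq _ _) (s2.trans (s3.trans (s4.trans s5)))
    · intro e hne
      by_cases he : e ∈ 𝒢.units ∧ x ∈ a.D₀ (𝒢.inv e)
      · have hnc : ¬ 𝒢.comp t e := by
          rw [𝒢.g_comp_unit_iff he.1]
          exact fun h => hne h.symm
        unfold skewMul
        rw [dif_neg (fun hc => hnc hc.1)]
      · beta_reduce
        rw [dif_neg he]
        exact hsm0r t e z x x f
  · -- u k = k
    intro s z k hz hk
    have hes : 𝒢.mul (𝒢.r s) s = s := 𝒢.g_r_mul s
    constructor
    · by_cases hk0 : k = 0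
      · subst hk0
        rw [hsm0r]
        exact C.zero_heq_zero rfl (by rw [hes])
      · have hxz : x ∈ a.D₀ s ∧ a.act₀ s z ∈ a.D₀ s := by
          by_contra hc
          rw [hbot s x (a.act₀ s z) hc] at hk
          exact hk0 ((Submodule.mem_bot R).1 hk)
        have hrs_unit : 𝒢.r s ∈ 𝒢.units := 𝒢.g_r_unit s
        have hxr : x ∈ a.D₀ (𝒢.r s) := hDr s hxz.1
        have hinvr : 𝒢.inv (𝒢.r s) = 𝒢.r s := 𝒢.g_unit_inv hrs_unit
        have hed : 𝒢.r s ∈ 𝒢.units ∧ x ∈ a.D₀ (𝒢.inv (𝒢.r s)) :=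
          ⟨hrs_unit, by rw [hinvr]; exact hxr⟩
        have hxe0 : a.act₀ (𝒢.r s) x = x := hid (𝒢.r s) hrs_unit x hxr
        have hsz : a.act₀ s z ∈ a.D₀ (𝒢.r s) := hDr s (hmem0 s z hz)
        have hse0 : a.act₀ (𝒢.r s) (a.act₀ s z) = a.act₀ s z := hid _ hrs_unit _ hsz
        have hcond : 𝒢.comp (𝒢.r s) s ∧ z ∈ a.D₀ (𝒢.inv (𝒢.mul (𝒢.r s) s)) ∧
            a.act₀ (𝒢.inv (𝒢.r s)) (a.act₀ (𝒢.r s) x) = x ∧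
            a.act₀ (𝒢.r s) (a.act₀ (𝒢.inv (𝒢.r s)) x) = x ∧
            a.act₀ (𝒢.r s) (a.act₀ s z) = a.act₀ (𝒢.mul (𝒢.r s) s) z := by
          exact ⟨𝒢.g_r_comp s, by rw [hes]; exact hz, by rw [hinvr, hxe0, hxe0],
            by rw [hinvr, hxe0, hxe0], by rw [hse0, hes]⟩
        beta_reduce
        unfold skewMul
        rw [dif_pos hcond, dif_pos hed]
        obtain ⟨hv1, hvl, hvr⟩ := (hloc x (𝒢.r s) hed.1 hed.2).choose_spec
        set v := (hloc x (𝒢.r s) hed.1 hed.2).choose with hvdef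
        have r'' : C.Hom x x = C.Hom x (a.act₀ (𝒢.r s) x) := by rw [hxe0]
        have hsrc : a.act₀ (𝒢.inv (𝒢.r s)) x = x := by rw [hinvr, hxe0]
        have A1 : HEq (a.act (𝒢.inv (𝒢.r s)) (cast r'' v)) (a.act (𝒢.r s) (cast r'' v)) := by
          rw [hinvr]
        have A2 : HEq (a.act (𝒢.r s) (cast r'' v)) (a.act (𝒢.r s) v) :=
          act_congr a (𝒢.r s) rfl hxe0 (cast_heq _ _)
        have A3 : HEq (a.act (𝒢.r s) v) v := hactunit (𝒢.r s) hrs_unit x x v hv1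
        have A : HEq (a.act (𝒢.inv (𝒢.r s)) (cast r'' v)) v := A1.trans (A2.trans A3)
        have q' : C.Hom (a.act₀ (𝒢.inv (𝒢.r s)) x)
              (a.act₀ (𝒢.inv (𝒢.r s)) (a.act₀ (𝒢.r s) x))
            = C.Hom (a.act₀ (𝒢.inv (𝒢.r s)) x) x := by rw [hcond.2.2.1]
        have B : HEq (cast q' (a.act (𝒢.inv (𝒢.r s)) (cast r'' v))) v :=
          (cast_heq _ _).trans A
        have hk_e : k ∈ a.I (𝒢.r s) x (a.act₀ s z) := (hidealin s).1 _ _ hk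
        have C1 : HEq (C.comp (cast q' (a.act (𝒢.inv (𝒢.r s)) (cast r'' v))) k)
            (C.comp v k) :=
          C.comp_congr hsrc rfl rfl B (HEq.refl k)
        have C2 : C.comp v k = k := hvl _ k hk_e
        have Cc : HEq (C.comp (cast q' (a.act (𝒢.inv (𝒢.r s)) (cast r'' v))) k) k :=
          C1.trans (heq_of_eq C2)
        have D : HEq (a.act (𝒢.r s) (C.comp (cast q' (a.act (𝒢.inv (𝒢.r s)) (cast r'' v))) k))
            (a.act (𝒢.r s) k) :=
          act_congr a (𝒢.r s) hsrc rfl Cc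
        have E : HEq (a.act (𝒢.r s) k) k := hactunit (𝒢.r s) hrs_unit x (a.act₀ s z) k hk_e
        exact HEq.trans (cast_heq _ _) (D.trans E)
    · intro e hne
      by_cases he : e ∈ 𝒢.units ∧ x ∈ a.D₀ (𝒢.inv e)
      · have hnc : ¬ 𝒢.comp e s := by
          rw [𝒢.g_unit_comp_iff he.1]
          exact hne
        unfold skewMul
        rw [dif_neg (fun hc => hnc hc.1)]
      · beta_reduce
        rw [dif_neg he]
        exact hsm0l e s x x z k
end
end

section
/- Let α = (I^g, α^g)_{g∈mor(𝒢)} be an associative partial action of a groupoid 𝒢 on an R-semicategory C. For each g ∈ mor(𝒢) set a(C)_g = ⊕_{x,y∈C₀} _yI^g_x ⊆ a(C) and let α_g : a(C)_{g⁻¹} → a(C)_g be the map induced componentwise by α^g. Then a(C)_{r(g)} is a two-sided ideal of a(C), a(C)_g is a two-sided ideal of a(C)_{r(g)}, each α_g is a ring isomorphism, and the family α_{a(C)} = (a(C)_g, α_g)_{g∈mor(𝒢)} is a partial action of 𝒢 on the ring a(C) (i.e. α_e = id_{a(C)_e} for e ∈ 𝒢₀, α_h⁻¹(a(C)_{g⁻¹}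 ∩ a(C)_h) ⊆ a(C)_{(gh)⁻¹}, and α_g(α_h(x)) = α_{gh}(x) for x ∈ α_h⁻¹(a(C)_{g⁻¹} ∩ a(C)_h), for every composable (g,h)). -/
open scoped Classical

noncomputable section

universe u u₂ v v' w w'

variable {R : Type u} [CommRing R] {G : Type u₂} {Ob : Type v}

section Stmt12Aux

variable {R : Type u} [CommRing R] {G : Type u₂} {Ob : Type v}

lemma grpd_r_inv (𝒢 : AlgGroupoid G) (g : G) : 𝒢.r (𝒢.inv g) = 𝒢.d g := by
  unfold AlgGroupoid.r AlgGroupoid.d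
  rw [𝒢.inv_inv']

lemma grpd_inv_unit (𝒢 : AlgGroupoid G) {e : G} (he : e ∈ 𝒢.units) : 𝒢.inv e = e := by
  obtain ⟨g, rfl⟩ := he
  unfold AlgGroupoid.d
  rw [𝒢.inv_mul' _ _ (𝒢.comp_inv_left g), 𝒢.inv_inv']

variable {𝒢 : AlgGroupoid G} {C : RSemicat.{u, v, w} R Ob} {a : SemicatActionData R G C}

lemma mem_aIdealSet {F : aHom C} {g : G} :
    F ∈ aIdealSet C a g ↔ ∀ p : Ob × Ob, F p ∈ a.I g p.1 p.2 := Iff.rfl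

lemma act_zero (hpa : IsSemicatPartialAction 𝒢 C a) (g : G) (y x : Ob) :
    a.act g (0 : C.Hom y x) = 0 := by
  have h := hpa.2.2.2.2.2.1 g y x 0 0 (Submodule.zero_mem _) (Submodule.zero_mem _)
  rw [add_zero] at h
  exact left_eq_add.mp h

lemma mem_D0 (hpa : IsSemicatPartialAction 𝒢 C a) {g : G} {y x : Ob} {f : C.Hom y x}
    (hf : f ∈ a.I g y x) (h0 : f ≠ 0) : y ∈ a.D₀ g ∧ x ∈ a.D₀ g := by
  by_contra hc
  rw [hpa.2.1 g y x hc] at hf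
  exact h0 (Submodule.mem_bot R |>.mp hf)

lemma act0_inj (hpa : IsSemicatPartialAction 𝒢 C a) {g : G} {y y' : Ob}
    (hy : y ∈ a.D₀ (𝒢.inv g)) (hy' : y' ∈ a.D₀ (𝒢.inv g))
    (h : a.act₀ g y = a.act₀ g y') : y = y' := by
  have h1 := hpa.1.2.2.2.2.2.1 g y hy
  have h2 := hpa.1.2.2.2.2.2.1 g y' hy'
  rw [← h1, ← h2, h]

lemma single_mem {J : ∀ y x : Ob, Submodule R (C.Hom y x)} (i : Ob × Ob)
    {b : C.Hom i.1 i.2} (hb : b ∈ J i.1 i.2)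
    (p : Ob × Ob) : (DFinsupp.single i b : aHom C) p ∈ J p.1 p.2 := by
  rcases eq_or_ne i p with rfl | hne
  · rw [DFinsupp.single_eq_same]; exact hb
  · rw [DFinsupp.single_eq_of_ne hne.symm]; exact Submodule.zero_mem _

lemma finsetSum_mem {g : G} {ι : Type*} (s : Finset ι) (f : ι → aHom C)
    (h : ∀ i ∈ s, ∀ p : Ob × Ob, f i p ∈ a.I g p.1 p.2) (p : Ob × Ob) :
    (∑ i ∈ s, f i) p ∈ a.I g p.1 p.2 := by
  rw [DFinsupp.finset_sum_apply]
  exact Submodule.sum_mem _ fun i hi => h i hi p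

lemma mem_aMul {J K' L : ∀ y x : Ob, Submodule R (C.Hom y x)}
    (hcomp : ∀ (z y x : Ob) (u : C.Hom z y) (f : C.Hom y x), u ∈ J z y → f ∈ K' y x →
      C.comp u f ∈ L z x)
    {F K : aHom C} (hF : ∀ p : Ob × Ob, F p ∈ J p.1 p.2) (hK : ∀ p : Ob × Ob, K p ∈ K' p.1 p.2)
    (p : Ob × Ob) : aMul C F K p ∈ L p.1 p.2 := by
  rw [aMul]
  simp only [DFinsupp.sum_apply]
  refine Submodule.sum_mem _ fun i _ => ?_
  refine Submodule.sum_mem _ fun q _ => ?_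
  obtain ⟨i1, i2⟩ := i
  obtain ⟨q1, q2⟩ := q
  dsimp only
  by_cases hh : i2 = q1
  · subst hh
    rw [dif_pos rfl]
    refine single_mem _ ?_ p
    exact hcomp i1 i2 q2 _ _ (hF (i1, i2)) (hK (i2, q2))
  · rw [dif_neg hh]
    rw [DFinsupp.zero_apply]
    exact Submodule.zero_mem _

lemma aAct_zero (g : G) : aAct a g (0 : aHom C) = 0 := by
  rw [aAct]
  exact DFinsupp.sum_zero_index

lemma aAct_single (hpa : IsSemicatPartialAction 𝒢 C a) (g : G) (i : Ob × Ob)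
    (b : C.Hom i.1 i.2) :
    aAct a g (DFinsupp.single i b) =
      DFinsupp.single (⟨a.act₀ g i.1, a.act₀ g i.2⟩ : Ob × Ob) (a.act g b) := by
  rw [aAct]
  exact DFinsupp.sum_single_index (by rw [act_zero hpa, DFinsupp.single_zero])

lemma aAct_mem (hpa : IsSemicatPartialAction 𝒢 C a) (g : G) {F : aHom C}
    (hF : F ∈ aIdealSet C a (𝒢.inv g)) : aAct a g F ∈ aIdealSet C a g := by
  refine mem_aIdealSet.mpr fun p => ?_
  rw [aAct, DFinsupp.sum_apply]
  refine Submodule.sum_mem _ fun q _ => ?_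
  exact single_mem _ (hpa.2.2.2.2.1 g q.1 q.2 (F q) (mem_aIdealSet.mp hF q)) p

lemma aAct_apply_eq_zero (hpa : IsSemicatPartialAction 𝒢 C a) (g : G) {F : aHom C}
    (q : Ob × Ob)
    (h : ∀ p : Ob × Ob, F p ≠ 0 → (⟨a.act₀ g p.1, a.act₀ g p.2⟩ : Ob × Ob) ≠ q) :
    aAct a g F q = 0 := by
  rw [aAct, DFinsupp.sum_apply]
  refine DFinsupp.sum_eq_zero fun p => ?_
  by_cases hp : F p = 0
  · rw [hp, act_zero hpa, DFinsupp.single_zero, DFinsupp.zero_apply]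
  · exact DFinsupp.single_eq_of_ne (h p hp).symm

lemma aAct_apply_img (hpa : IsSemicatPartialAction 𝒢 C a) (g : G) {F : aHom C}
    (hF : F ∈ aIdealSet C a (𝒢.inv g))
    {y x : Ob} (hy : y ∈ a.D₀ (𝒢.inv g)) (hx : x ∈ a.D₀ (𝒢.inv g)) :
    aAct a g F (⟨a.act₀ g y, a.act₀ g x⟩ : Ob × Ob) = a.act g (F (y, x)) := by
  rw [aAct, DFinsupp.sum_apply]
  have hne0 : ∀ p : Ob × Ob, F p ≠ 0 → p ≠ (y, x) →
      (DFinsupp.single (⟨a.act₀ g p.1, a.act₀ g p.2⟩ : Ob × Ob) (a.act g (F p)) : aHom C)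
        (⟨a.act₀ g y, a.act₀ g x⟩ : Ob × Ob) = 0 := by
    intro p hp hne
    refine DFinsupp.single_eq_of_ne fun hcon => hne ?_
    obtain ⟨hq1, hq2⟩ := mem_D0 hpa (mem_aIdealSet.mp hF p) hp
    exact Prod.ext (act0_inj hpa hq1 hy (congrArg Prod.fst hcon.symm))
      (act0_inj hpa hq2 hx (congrArg Prod.snd hcon.symm))
  by_cases hmem : ((y, x) : Ob × Ob) ∈ F.support
  · refine (Finset.sum_eq_single_of_mem _ hmem fun p hp hne =>
      hne0 p (DFinsupp.mem_support_iff.mp hp) hne).trans ?_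
    exact DFinsupp.single_eq_same
  · rw [DFinsupp.notMem_support_iff.mp hmem, act_zero hpa]
    refine Finset.sum_eq_zero fun p hp => ?_
    refine hne0 p (DFinsupp.mem_support_iff.mp hp) fun hcon => ?_
    rw [hcon] at hp
    exact hmem hp

lemma aAct_apply_img_heq (hpa : IsSemicatPartialAction 𝒢 C a) (g : G) {F : aHom C}
    (hF : F ∈ aIdealSet C a (𝒢.inv g))
    {y x : Ob} (hy : y ∈ a.D₀ (𝒢.inv g)) (hx : x ∈ a.D₀ (𝒢.inv g)) {q : Ob × Ob}
    (hq : (⟨a.act₀ g y, a.act₀ g x⟩ : Ob × Ob) = q) :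
    HEq (aAct a g F q) (a.act g (F (y, x))) := by
  subst hq
  exact heq_of_eq (aAct_apply_img hpa g hF hy hx)

lemma act_inv_act (hpa : IsSemicatPartialAction 𝒢 C a) (g : G) {y x : Ob} {f : C.Hom y x}
    (hf : f ∈ a.I (𝒢.inv g) y x) :
    HEq (a.act (𝒢.inv g) (a.act g f)) f := by
  have h1 : a.act g f ∈ a.I (𝒢.inv (𝒢.inv g)) (a.act₀ g y) (a.act₀ g x) := by
    rw [𝒢.inv_inv']
    exact hpa.2.2.2.2.1 g y x f hf
  have h2 := hpa.2.2.2.2.2.2.2.2.2.2.2.2 (𝒢.inv g) g (𝒢.comp_inv_left g) y x f hf h1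
  refine h2.trans ?_
  have hfd : f ∈ a.I (𝒢.d g) y x := by
    have h3 := (hpa.2.2.1 (𝒢.inv g)).1 y x hf
    rwa [grpd_r_inv] at h3
  exact hpa.2.2.2.2.2.2.2.2.2.2.1 (𝒢.d g) ⟨g, rfl⟩ y x f hfd

lemma aAct_add (hpa : IsSemicatPartialAction 𝒢 C a) (g : G) {F K : aHom C}
    (hF : F ∈ aIdealSet C a (𝒢.inv g)) (hK : K ∈ aIdealSet C a (𝒢.inv g)) :
    aAct a g (F + K) = aAct a g F + aAct a g K := by
  have hFK : F + K ∈ aIdealSet C a (𝒢.inv g) := mem_aIdealSet.mpr fun p => by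
    rw [DFinsupp.add_apply]
    exact Submodule.add_mem _ (mem_aIdealSet.mp hF p) (mem_aIdealSet.mp hK p)
  ext q
  rw [DFinsupp.add_apply]
  by_cases hq : ∃ p : Ob × Ob, p.1 ∈ a.D₀ (𝒢.inv g) ∧ p.2 ∈ a.D₀ (𝒢.inv g) ∧
      (⟨a.act₀ g p.1, a.act₀ g p.2⟩ : Ob × Ob) = q
  · obtain ⟨⟨p1, p2⟩, h1, h2, rfl⟩ := hq
    rw [aAct_apply_img hpa g hFK h1 h2, aAct_apply_img hpa g hF h1 h2,
      aAct_apply_img hpa g hK h1 h2, DFinsupp.add_apply]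
    exact hpa.2.2.2.2.2.1 g p1 p2 _ _ (mem_aIdealSet.mp hF (p1, p2))
      (mem_aIdealSet.mp hK (p1, p2))
  · push_neg at hq
    have hz : ∀ W : aHom C, W ∈ aIdealSet C a (𝒢.inv g) → aAct a g W q = 0 := by
      intro W hW
      refine aAct_apply_eq_zero hpa g q fun p hp hcon => ?_
      obtain ⟨d1, d2⟩ := mem_D0 hpa (mem_aIdealSet.mp hW p) hp
      exact hq p d1 d2 hcon
    rw [hz F hF, hz K hK, hz (F + K) hFK, add_zero]

lemma aAct_inv_aAct (hpa : IsSemicatPartialAction 𝒢 C a) (g : G) {F : aHom C}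
    (hF : F ∈ aIdealSet C a (𝒢.inv g)) :
    aAct a (𝒢.inv g) (aAct a g F) = F := by
  have hK : aAct a g F ∈ aIdealSet C a g := aAct_mem hpa g hF
  have hKi : aAct a g F ∈ aIdealSet C a (𝒢.inv (𝒢.inv g)) := by
    rw [𝒢.inv_inv']; exact hK
  ext q
  obtain ⟨q1, q2⟩ := q
  by_cases hq : q1 ∈ a.D₀ (𝒢.inv g) ∧ q2 ∈ a.D₀ (𝒢.inv g)
  · obtain ⟨h1, h2⟩ := hq
    have hy : a.act₀ g q1 ∈ a.D₀ (𝒢.inv (𝒢.inv g)) := by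
      rw [𝒢.inv_inv']; exact hpa.1.2.2.2.2.1 g q1 h1
    have hx : a.act₀ g q2 ∈ a.D₀ (𝒢.inv (𝒢.inv g)) := by
      rw [𝒢.inv_inv']; exact hpa.1.2.2.2.2.1 g q2 h2
    have e1 : a.act₀ (𝒢.inv g) (a.act₀ g q1) = q1 := hpa.1.2.2.2.2.2.1 g q1 h1
    have e2 : a.act₀ (𝒢.inv g) (a.act₀ g q2) = q2 := hpa.1.2.2.2.2.2.1 g q2 h2
    have hh := aAct_apply_img_heq hpa (𝒢.inv g) hKi hy hx (q := (q1, q2)) (by rw [e1, e2])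
    refine eq_of_heq (hh.trans ?_)
    rw [aAct_apply_img hpa g hF h1 h2]
    exact act_inv_act hpa g (mem_aIdealSet.mp hF (q1, q2))
  · have hF0 : F (q1, q2) = 0 := by
      have hb := hpa.2.1 (𝒢.inv g) q1 q2 hq
      have h := mem_aIdealSet.mp hF (q1, q2)
      rw [hb] at h
      simpa using h
    rw [hF0]
    refine aAct_apply_eq_zero hpa (𝒢.inv g) _ fun p hp hcon => ?_
    obtain ⟨d1, d2⟩ := mem_D0 hpa (mem_aIdealSet.mp hKi p) hp
    have m1 : a.act₀ (𝒢.inv g) p.1 ∈ a.D₀ (𝒢.inv g) := hpa.1.2.2.2.2.1 (𝒢.inv g) p.1 d1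
    have m2 : a.act₀ (𝒢.inv g) p.2 ∈ a.D₀ (𝒢.inv g) := hpa.1.2.2.2.2.1 (𝒢.inv g) p.2 d2
    simp only [Prod.mk.injEq] at hcon
    obtain ⟨f1, f2⟩ := hcon
    refine hq ⟨?_, ?_⟩
    · rw [← f1]; exact m1
    · rw [← f2]; exact m2

lemma aAct_unit (hpa : IsSemicatPartialAction 𝒢 C a) {e : G} (he : e ∈ 𝒢.units)
    {F : aHom C} (hF : F ∈ aIdealSet C a e) : aAct a e F = F := by
  have hinv := grpd_inv_unit 𝒢 he
  have hFi : F ∈ aIdealSet C a (𝒢.inv e) := by rw [hinv]; exact hF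
  ext q
  obtain ⟨q1, q2⟩ := q
  by_cases hq : q1 ∈ a.D₀ e ∧ q2 ∈ a.D₀ e
  · obtain ⟨h1, h2⟩ := hq
    have h1' : q1 ∈ a.D₀ (𝒢.inv e) := by rw [hinv]; exact h1
    have h2' : q2 ∈ a.D₀ (𝒢.inv e) := by rw [hinv]; exact h2
    have e1 : a.act₀ e q1 = q1 := hpa.1.2.2.2.1 e he q1 h1
    have e2 : a.act₀ e q2 = q2 := hpa.1.2.2.2.1 e he q2 h2
    refine eq_of_heq ((aAct_apply_img_heq hpa e hFi h1' h2' (q := (q1, q2))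
      (by rw [e1, e2])).trans ?_)
    exact hpa.2.2.2.2.2.2.2.2.2.2.1 e he q1 q2 (F (q1, q2)) (mem_aIdealSet.mp hF (q1, q2))
  · have hF0 : F (q1, q2) = 0 := by
      have hb := hpa.2.1 e q1 q2 hq
      have h := mem_aIdealSet.mp hF (q1, q2)
      rw [hb] at h
      simpa using h
    rw [hF0]
    refine aAct_apply_eq_zero hpa e _ fun p hp hcon => ?_
    obtain ⟨d1, d2⟩ := mem_D0 hpa (mem_aIdealSet.mp hF p) hp
    have e1 : a.act₀ e p.1 = p.1 := hpa.1.2.2.2.1 e he p.1 d1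
    have e2 : a.act₀ e p.2 = p.2 := hpa.1.2.2.2.1 e he p.2 d2
    simp only [Prod.mk.injEq] at hcon
    obtain ⟨f1, f2⟩ := hcon
    refine hq ⟨?_, ?_⟩
    · rw [← f1, e1]; exact d1
    · rw [← f2, e2]; exact d2

lemma aAct_comp_mem (hpa : IsSemicatPartialAction 𝒢 C a) {g h : G} (hc : 𝒢.comp g h)
    {F : aHom C} (hFg : F ∈ aIdealSet C a (𝒢.inv g)) (hFh : F ∈ aIdealSet C a h) :
    aAct a (𝒢.inv h) F ∈ aIdealSet C a (𝒢.inv (𝒢.mul g h)) := by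
  refine mem_aIdealSet.mpr fun p => ?_
  rw [aAct, DFinsupp.sum_apply]
  refine Submodule.sum_mem _ fun q _ => ?_
  exact single_mem _ (hpa.2.2.2.2.2.2.2.2.2.2.2.1 g h hc q.1 q.2 (F q)
    (mem_aIdealSet.mp hFh q) (mem_aIdealSet.mp hFg q)) p

lemma aAct_aAct (hpa : IsSemicatPartialAction 𝒢 C a) {g h : G} (hc : 𝒢.comp g h)
    {F : aHom C} (hF : F ∈ aIdealSet C a (𝒢.inv h))
    (hK : aAct a h F ∈ aIdealSet C a (𝒢.inv g)) :
    aAct a g (aAct a h F) = aAct a (𝒢.mul g h) F := by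
  have hKh : aAct a h F ∈ aIdealSet C a h := aAct_mem hpa h hF
  have hFgh : F ∈ aIdealSet C a (𝒢.inv (𝒢.mul g h)) := by
    have h1 : aAct a (𝒢.inv h) (aAct a h F) ∈ aIdealSet C a (𝒢.inv (𝒢.mul g h)) :=
      aAct_comp_mem hpa hc hK hKh
    rwa [aAct_inv_aAct hpa h hF] at h1
  have key : ∀ p1 p2 : Ob, F (p1, p2) ≠ 0 →
      p1 ∈ a.D₀ (𝒢.inv h) ∧ p2 ∈ a.D₀ (𝒢.inv h) ∧
      a.act₀ h p1 ∈ a.D₀ (𝒢.inv g) ∧ a.act₀ h p2 ∈ a.D₀ (𝒢.inv g) ∧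
      a.act₀ g (a.act₀ h p1) = a.act₀ (𝒢.mul g h) p1 ∧
      a.act₀ g (a.act₀ h p2) = a.act₀ (𝒢.mul g h) p2 := by
    intro p1 p2 hp
    obtain ⟨d1, d2⟩ := mem_D0 hpa (mem_aIdealSet.mp hF (p1, p2)) hp
    have hKp : aAct a h F (⟨a.act₀ h p1, a.act₀ h p2⟩ : Ob × Ob) = a.act h (F (p1, p2)) :=
      aAct_apply_img hpa h hF d1 d2
    have hact_ne : a.act h (F (p1, p2)) ≠ 0 := by
      intro h0
      refine hp (hpa.2.2.2.2.2.2.2.1 h p1 p2 (F (p1, p2)) 0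
        (mem_aIdealSet.mp hF (p1, p2)) (Submodule.zero_mem _) ?_)
      rw [h0, act_zero hpa]
    have hKne : aAct a h F (⟨a.act₀ h p1, a.act₀ h p2⟩ : Ob × Ob) ≠ 0 := by
      rw [hKp]; exact hact_ne
    obtain ⟨m1, m2⟩ := mem_D0 hpa (mem_aIdealSet.mp hK (⟨a.act₀ h p1, a.act₀ h p2⟩)) hKne
    have hmem1 : a.act₀ h p1 ∈ a.D₀ h := hpa.1.2.2.2.2.1 h p1 d1
    have hmem2 : a.act₀ h p2 ∈ a.D₀ h := hpa.1.2.2.2.2.1 h p2 d2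
    exact ⟨d1, d2, m1, m2, hpa.1.2.2.2.2.2.2.2 g h hc p1 d1 ⟨m1, hmem1⟩,
      hpa.1.2.2.2.2.2.2.2 g h hc p2 d2 ⟨m2, hmem2⟩⟩
  ext q
  obtain ⟨q1, q2⟩ := q
  by_cases hq : ∃ p : Ob × Ob, F p ≠ 0 ∧
      (⟨a.act₀ (𝒢.mul g h) p.1, a.act₀ (𝒢.mul g h) p.2⟩ : Ob × Ob) = (q1, q2)
  · obtain ⟨⟨p1, p2⟩, hp0, hpr⟩ := hq
    obtain ⟨d1, d2, m1, m2, e1, e2⟩ := key p1 p2 hp0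
    have hr : HEq (aAct a (𝒢.mul g h) F (q1, q2)) (a.act (𝒢.mul g h) (F (p1, p2))) :=
      aAct_apply_img_heq hpa (𝒢.mul g h) hFgh
        (mem_D0 hpa (mem_aIdealSet.mp hFgh (p1, p2)) hp0).1
        (mem_D0 hpa (mem_aIdealSet.mp hFgh (p1, p2)) hp0).2 hpr
    have hl : HEq (aAct a g (aAct a h F) (q1, q2))
        (a.act g (aAct a h F (⟨a.act₀ h p1, a.act₀ h p2⟩ : Ob × Ob))) :=
      aAct_apply_img_heq hpa g hK m1 m2 (by rw [e1, e2]; exact hpr)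
    have hKp : aAct a h F (⟨a.act₀ h p1, a.act₀ h p2⟩ : Ob × Ob) = a.act h (F (p1, p2)) :=
      aAct_apply_img hpa h hF d1 d2
    have hmid : HEq (a.act g (a.act h (F (p1, p2)))) (a.act (𝒢.mul g h) (F (p1, p2))) := by
      refine hpa.2.2.2.2.2.2.2.2.2.2.2.2 g h hc p1 p2 (F (p1, p2))
        (mem_aIdealSet.mp hF (p1, p2)) ?_
      have h3 := mem_aIdealSet.mp hK (⟨a.act₀ h p1, a.act₀ h p2⟩)
      rwa [hKp] at h3
    refine eq_of_heq (hl.trans ?_)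
    rw [hKp]
    exact hmid.trans hr.symm
  · push_neg at hq
    have hr : aAct a (𝒢.mul g h) F (q1, q2) = 0 :=
      aAct_apply_eq_zero hpa _ _ fun p hp => hq p hp
    have hl : aAct a g (aAct a h F) (q1, q2) = 0 := by
      refine aAct_apply_eq_zero hpa _ _ fun p hp hcon => ?_
      have hex : ∃ p' : Ob × Ob, F p' ≠ 0 ∧
          (⟨a.act₀ h p'.1, a.act₀ h p'.2⟩ : Ob × Ob) = p := by
        by_contra hno
        push_neg at hno
        exact hp (aAct_apply_eq_zero hpa h p hno)
      obtain ⟨⟨p1, p2⟩, hp0, rfl⟩ := hex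
      obtain ⟨d1, d2, m1, m2, e1, e2⟩ := key p1 p2 hp0
      refine hq (p1, p2) hp0 ?_
      rw [← e1, ← e2]
      exact hcon
    rw [hl, hr]

lemma aMul_zero_left (K : aHom C) : aMul C 0 K = 0 := by
  rw [aMul]
  exact DFinsupp.sum_zero_index

lemma aMul_zero_right (F : aHom C) : aMul C F 0 = 0 := by
  rw [aMul]
  refine DFinsupp.sum_eq_zero fun p => ?_
  exact DFinsupp.sum_zero_index

lemma aMul_add_left (F F' K : aHom C) : aMul C (F + F') K = aMul C F K + aMul C F' K := by
  rw [aMul, aMul, aMul]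
  refine DFinsupp.sum_add_index ?_ ?_
  · intro p
    refine DFinsupp.sum_eq_zero fun q => ?_
    by_cases hh : p.2 = q.1
    · rw [dif_pos hh, C.comp_zero_left, DFinsupp.single_zero]
    · rw [dif_neg hh]
  · intro p b₁ b₂
    rw [← DFinsupp.sum_add]
    refine Finset.sum_congr rfl fun q _ => ?_
    dsimp only
    by_cases hh : p.2 = q.1
    · rw [dif_pos hh, dif_pos hh, dif_pos hh, ← DFinsupp.single_add, ← C.comp_add_left]
    · rw [dif_neg hh, dif_neg hh, dif_neg hh, add_zero]

lemma aMul_add_right (F K K' : aHom C) : aMul C F (K + K') = aMul C F K + aMul C F K' := by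
  rw [aMul, aMul, aMul, ← DFinsupp.sum_add]
  refine Finset.sum_congr rfl fun p _ => ?_
  dsimp only
  refine DFinsupp.sum_add_index ?_ ?_
  · intro q
    obtain ⟨p1, p2⟩ := p
    obtain ⟨q1, q2⟩ := q
    dsimp only
    by_cases hh : p2 = q1
    · subst hh
      rw [dif_pos rfl, cast_eq, C.comp_zero_right, DFinsupp.single_zero]
    · rw [dif_neg hh]
  · intro q b₁ b₂
    obtain ⟨p1, p2⟩ := p
    obtain ⟨q1, q2⟩ := q
    dsimp only
    by_cases hh : p2 = q1
    · subst hh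
      rw [dif_pos rfl, dif_pos rfl, dif_pos rfl, cast_eq, cast_eq, cast_eq,
        ← DFinsupp.single_add, ← C.comp_add_right]
    · rw [dif_neg hh, dif_neg hh, dif_neg hh, add_zero]

lemma aMul_finsetSum_left {ι : Type*} (s : Finset ι) (f : ι → aHom C) (K : aHom C) :
    aMul C (∑ i ∈ s, f i) K = ∑ i ∈ s, aMul C (f i) K := by
  induction s using Finset.induction_on with
  | empty => simp only [Finset.sum_empty]; exact aMul_zero_left K
  | @insert i s hi ih =>
    rw [Finset.sum_insert hi, Finset.sum_insert hi, aMul_add_left, ih]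

lemma aMul_finsetSum_right {ι : Type*} (s : Finset ι) (F : aHom C) (f : ι → aHom C) :
    aMul C F (∑ i ∈ s, f i) = ∑ i ∈ s, aMul C F (f i) := by
  induction s using Finset.induction_on with
  | empty => simp only [Finset.sum_empty]; exact aMul_zero_right F
  | @insert i s hi ih =>
    rw [Finset.sum_insert hi, Finset.sum_insert hi, aMul_add_right, ih]

lemma aAct_finsetSum (hpa : IsSemicatPartialAction 𝒢 C a) (g : G) {ι : Type*}
    (s : Finset ι) (f : ι → aHom C) (hf : ∀ i ∈ s, f i ∈ aIdealSet C a (𝒢.inv g)) :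
    aAct a g (∑ i ∈ s, f i) = ∑ i ∈ s, aAct a g (f i) := by
  induction s using Finset.induction_on with
  | empty => simp only [Finset.sum_empty]; exact aAct_zero g
  | @insert i s hi ih =>
    rw [Finset.sum_insert hi, Finset.sum_insert hi,
      aAct_add hpa g (hf i (Finset.mem_insert_self i s))
        (mem_aIdealSet.mpr (finsetSum_mem s f fun j hj =>
          mem_aIdealSet.mp (hf j (Finset.mem_insert_of_mem hj)))),
      ih fun j hj => hf j (Finset.mem_insert_of_mem hj)]

lemma aMul_single_single (i j : Ob × Ob) (b : C.Hom i.1 i.2) (c : C.Hom j.1 j.2) :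
    aMul C (DFinsupp.single i b) (DFinsupp.single j c) =
      if h : i.2 = j.1 then
        DFinsupp.single (⟨i.1, j.2⟩ : Ob × Ob) (C.comp b (cast (by rw [h]) c))
      else 0 := by
  obtain ⟨i1, i2⟩ := i
  obtain ⟨j1, j2⟩ := j
  have h1 : aMul C (DFinsupp.single (⟨i1, i2⟩ : Ob × Ob) b)
      (DFinsupp.single (⟨j1, j2⟩ : Ob × Ob) c) =
      DFinsupp.sum (DFinsupp.single (⟨j1, j2⟩ : Ob × Ob) c) (fun q w =>
        if h : i2 = q.1 then
          DFinsupp.single (⟨i1, q.2⟩ : Ob × Ob) (C.comp b (cast (by rw [h]) w))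
        else 0) := by
    rw [aMul]
    refine DFinsupp.sum_single_index ?_
    refine DFinsupp.sum_eq_zero fun q => ?_
    by_cases hh : i2 = q.1
    · rw [dif_pos hh, C.comp_zero_left, DFinsupp.single_zero]
    · rw [dif_neg hh]
  rw [h1]
  refine DFinsupp.sum_single_index ?_
  by_cases hh : i2 = j1
  · subst hh
    rw [dif_pos rfl, cast_eq, C.comp_zero_right, DFinsupp.single_zero]
  · rw [dif_neg hh]

lemma aAct_term (hpa : IsSemicatPartialAction 𝒢 C a) (g : G) (p q : Ob × Ob)
    (v : C.Hom p.1 p.2) (w : C.Hom q.1 q.2)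
    (hv : v ∈ a.I (𝒢.inv g) p.1 p.2) (hw : w ∈ a.I (𝒢.inv g) q.1 q.2)
    (hv0 : v ≠ 0) (hw0 : w ≠ 0) :
    aAct a g (if h : p.2 = q.1 then
        DFinsupp.single (⟨p.1, q.2⟩ : Ob × Ob) (C.comp v (cast (by rw [h]) w)) else 0) =
      aMul C (DFinsupp.single (⟨a.act₀ g p.1, a.act₀ g p.2⟩ : Ob × Ob) (a.act g v))
        (DFinsupp.single (⟨a.act₀ g q.1, a.act₀ g q.2⟩ : Ob × Ob) (a.act g w)) := by
  obtain ⟨p1, p2⟩ := p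
  obtain ⟨q1, q2⟩ := q
  rw [aMul_single_single]
  by_cases hh : p2 = q1
  · subst hh
    rw [dif_pos rfl, dif_pos rfl, aAct_single hpa]
    exact congrArg _ (hpa.2.2.2.2.2.2.2.2.2.1 g p1 p2 q2 v w hv hw)
  · have hne : ¬((⟨a.act₀ g p1, a.act₀ g p2⟩ : Ob × Ob).2 =
        (⟨a.act₀ g q1, a.act₀ g q2⟩ : Ob × Ob).1) := fun hcon =>
      hh (act0_inj hpa (mem_D0 hpa hv hv0).2 (mem_D0 hpa hw hw0).1 hcon)
    rw [dif_neg hh, dif_neg hne]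
    exact aAct_zero g

lemma aAct_aMul (hpa : IsSemicatPartialAction 𝒢 C a) (g : G) {F K : aHom C}
    (hF : F ∈ aIdealSet C a (𝒢.inv g)) (hK : K ∈ aIdealSet C a (𝒢.inv g)) :
    aAct a g (aMul C F K) = aMul C (aAct a g F) (aAct a g K) := by
  have hIcomp : ∀ (z y x : Ob) (u : C.Hom z y) (f : C.Hom y x), u ∈ a.I (𝒢.inv g) z y →
      f ∈ a.I (𝒢.inv g) y x → C.comp u f ∈ a.I (𝒢.inv g) z x := by
    intro z y x u f hu hf
    exact (hpa.2.2.1 (𝒢.inv g)).2.1 z y x u f ((hpa.2.2.1 (𝒢.inv g)).1 z y hu) hf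
  have hT : ∀ p q : Ob × Ob, (if h : p.2 = q.1 then
      DFinsupp.single (⟨p.1, q.2⟩ : Ob × Ob) (C.comp (F p) (cast (by rw [h]) (K q))) else 0)
      ∈ aIdealSet C a (𝒢.inv g) := by
    intro p q
    refine mem_aIdealSet.mpr fun r => ?_
    obtain ⟨p1, p2⟩ := p
    obtain ⟨q1, q2⟩ := q
    dsimp only
    by_cases hh : p2 = q1
    · subst hh
      rw [dif_pos rfl]
      refine single_mem _ ?_ r
      exact hIcomp p1 p2 q2 _ _ (mem_aIdealSet.mp hF (p1, p2)) (mem_aIdealSet.mp hK (p2, q2))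
    · rw [dif_neg hh, DFinsupp.zero_apply]
      exact Submodule.zero_mem _
  have hTmem : ∀ p ∈ F.support, (DFinsupp.sum K fun q w =>
      if h : p.2 = q.1 then
        DFinsupp.single (⟨p.1, q.2⟩ : Ob × Ob) (C.comp (F p) (cast (by rw [h]) w)) else 0)
      ∈ aIdealSet C a (𝒢.inv g) := by
    intro p _
    refine mem_aIdealSet.mpr fun r => ?_
    rw [DFinsupp.sum_apply]
    refine Submodule.sum_mem _ fun q _ => ?_
    exact mem_aIdealSet.mp (hT p q) r
  calc aAct a g (aMul C F K)
      = ∑ p ∈ F.support, aAct a g (DFinsupp.sum K fun q w =>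
          if h : p.2 = q.1 then
            DFinsupp.single (⟨p.1, q.2⟩ : Ob × Ob) (C.comp (F p) (cast (by rw [h]) w))
          else 0) := by
        rw [aMul]
        exact aAct_finsetSum hpa g F.support _ hTmem
    _ = ∑ p ∈ F.support, ∑ q ∈ K.support, aAct a g
          (if h : p.2 = q.1 then
            DFinsupp.single (⟨p.1, q.2⟩ : Ob × Ob) (C.comp (F p) (cast (by rw [h]) (K q)))
          else 0) := by
        refine Finset.sum_congr rfl fun p _ => ?_
        exact aAct_finsetSum hpa g K.support _ fun q _ => hT p q
    _ = ∑ p ∈ F.support, ∑ q ∈ K.support,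
          aMul C (DFinsupp.single (⟨a.act₀ g p.1, a.act₀ g p.2⟩ : Ob × Ob) (a.act g (F p)))
            (DFinsupp.single (⟨a.act₀ g q.1, a.act₀ g q.2⟩ : Ob × Ob) (a.act g (K q))) := by
        refine Finset.sum_congr rfl fun p hp => Finset.sum_congr rfl fun q hq => ?_
        exact aAct_term hpa g p q (F p) (K q) (mem_aIdealSet.mp hF p) (mem_aIdealSet.mp hK q)
          (DFinsupp.mem_support_iff.mp hp) (DFinsupp.mem_support_iff.mp hq)
    _ = aMul C (aAct a g F) (aAct a g K) := by
        have e1 : aMul C (aAct a g F) (aAct a g K) =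
            ∑ p ∈ F.support, aMul C
              (DFinsupp.single (⟨a.act₀ g p.1, a.act₀ g p.2⟩ : Ob × Ob) (a.act g (F p)))
              (aAct a g K) := aMul_finsetSum_left F.support _ _
        rw [e1]
        refine Finset.sum_congr rfl fun p _ => ?_
        exact (aMul_finsetSum_right K.support _ _).symm

end Stmt12Aux

/-- Let `α` be an associative partial action of a groupoid
`𝒢` on an `R`-semicategory `C`. Then the family
`α_{a(C)} = (a(C)_g, α_g)` with `a(C)_g = ⊕_{x,y} _yI^g_x` and `α_g`
induced componentwise by `α^g` is a partial action of `𝒢` on the ring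
`a(C)`; in particular `a(C)_{r g}` is a two-sided ideal of `a(C)`,
`a(C)_g` a two-sided ideal of `a(C)_{r g}` and each `α_g` a ring
isomorphism `a(C)_{g⁻¹} → a(C)_g`. -/
theorem stmt12 {R : Type u} [CommRing R] {G : Type u₂} {Ob : Type v}
    (𝒢 : AlgGroupoid G) (C : RSemicat.{u, v, w} R Ob) (a : SemicatActionData R G C)
    (hpa : IsSemicatPartialAction 𝒢 C a) (hassoc : SkewAssoc 𝒢 C a) :
    IsRingPartialAction 𝒢 (aMul C) (fun g => aIdealSet C a g) (fun g => aAct a g) := by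
  have hbot := hpa.2.1
  have hidealin := hpa.2.2.1
  have hideal := hpa.2.2.2.1
  refine ⟨?_, ?_, ?_, ?_, ?_, ?_, ?_, ?_, ?_, ?_⟩
  · -- a(C)_{r g} is a two-sided ideal of a(C)
    intro g
    refine ⟨Set.subset_univ _, ?_, ?_, ?_, ?_⟩
    · exact mem_aIdealSet.mpr fun p => by
        rw [DFinsupp.zero_apply]; exact Submodule.zero_mem _
    · intro A hA B hB
      exact mem_aIdealSet.mpr fun p => by
        rw [DFinsupp.add_apply]
        exact Submodule.add_mem _ (mem_aIdealSet.mp hA p) (mem_aIdealSet.mp hB p)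
    · intro A hA
      exact mem_aIdealSet.mpr fun p => by
        rw [DFinsupp.neg_apply]
        exact Submodule.neg_mem _ (mem_aIdealSet.mp hA p)
    · intro A _ B hB
      constructor
      · exact mem_aIdealSet.mpr (mem_aMul (J := fun _ _ => ⊤)
          (hcomp := fun z y x u f _ hf => (hideal g).1 z y x u f hf)
          (fun _ => Submodule.mem_top) (mem_aIdealSet.mp hB))
      · exact mem_aIdealSet.mpr (mem_aMul (K' := fun _ _ => ⊤)
          (hcomp := fun z y x u f hu _ => (hideal g).2 z y x u f hu)
          (mem_aIdealSet.mp hB) (fun _ => Submodule.mem_top))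
  · -- a(C)_g is a two-sided ideal of a(C)_{r g}
    intro g
    refine ⟨?_, ?_, ?_, ?_, ?_⟩
    · intro A hA
      exact mem_aIdealSet.mpr fun p => (hidealin g).1 p.1 p.2 (mem_aIdealSet.mp hA p)
    · exact mem_aIdealSet.mpr fun p => by
        rw [DFinsupp.zero_apply]; exact Submodule.zero_mem _
    · intro A hA B hB
      exact mem_aIdealSet.mpr fun p => by
        rw [DFinsupp.add_apply]
        exact Submodule.add_mem _ (mem_aIdealSet.mp hA p) (mem_aIdealSet.mp hB p)
    · intro A hA
      exact mem_aIdealSet.mpr fun p => by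
        rw [DFinsupp.neg_apply]
        exact Submodule.neg_mem _ (mem_aIdealSet.mp hA p)
    · intro A hA B hB
      constructor
      · exact mem_aIdealSet.mpr (mem_aMul
          (hcomp := fun z y x u f hu hf => (hidealin g).2.1 z y x u f hu hf)
          (mem_aIdealSet.mp hA) (mem_aIdealSet.mp hB))
      · exact mem_aIdealSet.mpr (mem_aMul
          (hcomp := fun z y x u f hu hf => (hidealin g).2.2 z y x u f hu hf)
          (mem_aIdealSet.mp hB) (mem_aIdealSet.mp hA))
  · -- α_g maps a(C)_{g⁻¹} into a(C)_g
    intro g F hF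
    exact aAct_mem hpa g hF
  · -- α_{g⁻¹} ∘ α_g = id
    intro g F hF
    exact aAct_inv_aAct hpa g hF
  · -- α_g is surjective onto a(C)_g
    intro g K hK
    have hKi : K ∈ aIdealSet C a (𝒢.inv (𝒢.inv g)) := by rw [𝒢.inv_inv']; exact hK
    refine ⟨aAct a (𝒢.inv g) K, aAct_mem hpa (𝒢.inv g) hKi, ?_⟩
    have h := aAct_inv_aAct hpa (𝒢.inv g) hKi
    rwa [𝒢.inv_inv'] at h
  · -- α_g is additive
    intro g F hF K hK
    exact aAct_add hpa g hF hK
  · -- α_g is multiplicative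
    intro g F hF K hK
    exact aAct_aMul hpa g hF hK
  · -- α_e = id
    intro e he F hF
    exact aAct_unit hpa he hF
  · -- α_{h⁻¹}(a(C)_{g⁻¹} ∩ a(C)_h) ⊆ a(C)_{(gh)⁻¹}
    intro g h hc F hFg hFh
    exact aAct_comp_mem hpa hc hFg hFh
  · -- α_g ∘ α_h = α_{gh}
    intro g h hc F hF hKg
    exact aAct_aAct hpa hc hF hKg
end
end
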